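/- arXiv:0901.2156 — 5 statements merged into one kernel-verified Lean document; each statement's English description precedes it below -/
import Mathlib

section
/- If a finite graded poset P is shellable (its maximal chains admit a shelling order), then every closed interval [a,b] of P is also shellable. -/
variable {P : Type*} [PartialOrder P]

/-- A finset `c` is a chain of the subposet `S`. -/
def IsChainIn (S : Set P) (c : Finset P) : Prop :=
  ↑c ⊆ S ∧ IsChain (· ≤ ·) (c : Set P)

/-- A finset `c` is a maximal chain of the subposet `S`. -/
def IsMaxChainIn (S : Set P) (c : Finset P) : Prop :=
  IsChainIn S c ∧ ∀ d : Finset P, IsChainIn S d → c ⊆ d → c = d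

/-- The subposet `S` is graded: in every closed interval of `S` all maximal chains
have the same length. -/
def GradedIn (S : Set P) : Prop :=
  ∀ a b : P, a ∈ S → b ∈ S → a ≤ b →
    ∀ c d : Finset P, IsMaxChainIn (S ∩ Set.Icc a b) c →
      IsMaxChainIn (S ∩ Set.Icc a b) d → c.card = d.card

/-- `lt` is a shelling order on the maximal chains of `S`: a strict total order such
that whenever `mi < mj` there are `mk < mj` and `x ∈ mj` with
`mi ∩ mj ⊆ mk ∩ mj = mj \ {x}`. -/
def IsShellingOrder [DecidableEq P] (S : Set P) (lt : Finset P → Finset P → Prop) : Prop :=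
  (∀ c d, IsMaxChainIn S c → IsMaxChainIn S d → c ≠ d → (lt c d ∨ lt d c)) ∧
  (∀ c d, lt c d → ¬ lt d c) ∧
  (∀ c d e, lt c d → lt d e → lt c e) ∧
  ∀ mi mj, IsMaxChainIn S mi → IsMaxChainIn S mj → lt mi mj →
    ∃ mk x, IsMaxChainIn S mk ∧ lt mk mj ∧ x ∈ mj ∧
      mi ∩ mj ⊆ mk ∩ mj ∧ mk ∩ mj = mj.erase x

/-- The subposet `S` is shellable: it is graded and its maximal chains admit a
shelling order. -/
def ShellableIn [DecidableEq P] (S : Set P) : Prop :=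
  GradedIn S ∧ ∃ lt, IsShellingOrder S lt

/-- Every chain extends to a maximal chain in a finite poset. -/
lemma exists_maxChainIn [Fintype P] (S : Set P) (c : Finset P) (hc : IsChainIn S c) :
    ∃ m, IsMaxChainIn S m ∧ c ⊆ m := by
  classical
  set T : Finset (Finset P) := Finset.univ.filter (fun d : Finset P => IsChainIn S d ∧ c ⊆ d)
    with hT
  have hcT : c ∈ T := by simp [hT, hc]
  obtain ⟨m, hmT, hmax⟩ := T.exists_max_image Finset.card ⟨c, hcT⟩
  simp only [hT, Finset.mem_filter] at hmT
  refine ⟨m, ⟨hmT.2.1, fun d hd hmd => Finset.eq_of_subset_of_card_le hmd ?_⟩, hmT.2.2⟩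
  exact hmax d (by simp [hT, hd, hmT.2.2.trans hmd])

/-- A minimum exists in any nonempty finite set totally ordered by a transitive relation. -/
lemma exists_min_rel {α : Type*} [DecidableEq α] (r : α → α → Prop)
    (htrans : ∀ a b c, r a b → r b c → r a c) (s : Finset α) (hne : s.Nonempty)
    (htot : ∀ a ∈ s, ∀ b ∈ s, a ≠ b → r a b ∨ r b a) :
    ∃ m ∈ s, ∀ x ∈ s, x ≠ m → r m x := by
  classical
  induction s using Finset.induction_on with
  | empty => simp at hne
  | @insert a t ha ih =>
    rcases t.eq_empty_or_nonempty with rfl | hte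
    · exact ⟨a, by simp, by simp⟩
    · obtain ⟨m, hm, hmin⟩ := ih hte (fun x hx y hy =>
        htot x (Finset.mem_insert_of_mem hx) y (Finset.mem_insert_of_mem hy))
      have ham : a ≠ m := fun h => ha (h ▸ hm)
      rcases htot a (Finset.mem_insert_self _ _) m (Finset.mem_insert_of_mem hm) ham with h | h
      · refine ⟨a, Finset.mem_insert_self _ _, ?_⟩
        intro x hx hxa
        rcases Finset.mem_insert.1 hx with rfl | hx
        · exact absurd rfl hxa
        · by_cases hxm : x = m
          · exact hxm ▸ h
          · exact htrans _ _ _ h (hmin x hx hxm)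
      · refine ⟨m, Finset.mem_insert_of_mem hm, ?_⟩
        intro x hx hxm
        rcases Finset.mem_insert.1 hx with rfl | hx
        · exact h
        · exact hmin x hx hxm

/-- A maximal chain of a closed interval contains its endpoints. -/
lemma endpoints_mem_maxChainIn {a b : P} (hab : a ≤ b) {c : Finset P}
    (hc : IsMaxChainIn (Set.Icc a b) c) : a ∈ c ∧ b ∈ c := by
  classical
  constructor
  · have hchain : IsChainIn (Set.Icc a b) (insert a c) := by
      refine ⟨?_, ?_⟩
      · rw [Finset.coe_insert]
        exact Set.insert_subset ⟨le_refl a, hab⟩ hc.1.1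
      · rw [Finset.coe_insert]
        exact hc.1.2.insert (fun z hz _ => Or.inl (hc.1.1 hz).1)
    have := hc.2 _ hchain (Finset.subset_insert _ _)
    rw [this]; exact Finset.mem_insert_self _ _
  · have hchain : IsChainIn (Set.Icc a b) (insert b c) := by
      refine ⟨?_, ?_⟩
      · rw [Finset.coe_insert]
        exact Set.insert_subset ⟨hab, le_refl b⟩ hc.1.1
      · rw [Finset.coe_insert]
        exact hc.1.2.insert (fun z hz _ => Or.inr (hc.1.1 hz).2)
    have := hc.2 _ hchain (Finset.subset_insert _ _)
    rw [this]; exact Finset.mem_insert_self _ _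

/-- The trace on `[a,b]` of a maximal chain of `P` through `a` and `b` is a maximal
chain of `[a,b]`. -/
lemma maxChain_inter [DecidableEq P] {a b : P} {m d : Finset P} (hm : IsMaxChainIn Set.univ m)
    (haM : a ∈ m) (hbM : b ∈ m) (hd : (↑d : Set P) = ↑m ∩ Set.Icc a b) :
    IsMaxChainIn (Set.Icc a b) d := by
  have hdm : (↑d : Set P) ⊆ ↑m := by rw [hd]; exact Set.inter_subset_left
  have hdI : (↑d : Set P) ⊆ Set.Icc a b := by rw [hd]; exact Set.inter_subset_right
  refine ⟨⟨hdI, hm.1.2.mono hdm⟩, ?_⟩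
  intro e he hde
  -- m ∪ e is a chain of P
  have key : ∀ z ∈ m, ∀ w ∈ e, z ≠ w → z ≤ w ∨ w ≤ z := by
    intro z hz w hw hzw
    have hwI : w ∈ Set.Icc a b := he.1 hw
    by_cases hza : z = a
    · exact Or.inl (hza ▸ hwI.1)
    rcases hm.1.2 hz haM hza with hz1 | hz1
    · exact Or.inl (hz1.trans hwI.1)
    by_cases hzb : z = b
    · exact Or.inr (hwI.2.trans hzb.symm.le)
    rcases hm.1.2 hz hbM hzb with hz2 | hz2
    · have hzd : z ∈ d := by
        have : (z : P) ∈ (↑m : Set P) ∩ Set.Icc a b := ⟨hz, hz1, hz2⟩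
        rw [← hd] at this; exact this
      exact he.2 (hde hzd) hw hzw
    · exact Or.inr (hwI.2.trans hz2)
  have hchain : IsChainIn Set.univ (m ∪ e) := by
    refine ⟨Set.subset_univ _, ?_⟩
    intro z hz w hw hzw
    simp only [Finset.coe_union, Set.mem_union, Finset.mem_coe] at hz hw
    rcases hz with hz | hz <;> rcases hw with hw | hw
    · exact hm.1.2 hz hw hzw
    · exact key z hz w hw hzw
    · exact (key w hw z hz (Ne.symm hzw)).symm
    · exact he.2 hz hw hzw
  have hme := hm.2 _ hchain Finset.subset_union_left
  have hem : e ⊆ m := by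
    intro z hz
    have : z ∈ m ∪ e := Finset.mem_union_right _ hz
    rwa [← hme] at this
  have hed : e ⊆ d := by
    intro z hz
    have : (z : P) ∈ (↑m : Set P) ∩ Set.Icc a b := ⟨hem hz, he.1 hz⟩
    rw [← hd] at this; exact this
  exact Finset.Subset.antisymm hde hed

/-- A maximal chain of `[a,b]` equals the trace on `[a,b]` of any chain of `P`
containing it. -/
lemma eq_of_subset_maxChain {a b : P} {c m d : Finset P}
    (hc : IsMaxChainIn (Set.Icc a b) c) (hm : IsChainIn Set.univ m) (hcm : c ⊆ m)
    (hd : (↑d : Set P) = ↑m ∩ Set.Icc a b) : c = d := by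
  have hdm : (↑d : Set P) ⊆ ↑m := by rw [hd]; exact Set.inter_subset_left
  have hdI : (↑d : Set P) ⊆ Set.Icc a b := by rw [hd]; exact Set.inter_subset_right
  refine hc.2 d ⟨hdI, hm.2.mono hdm⟩ ?_
  intro z hz
  have : (z : P) ∈ (↑m : Set P) ∩ Set.Icc a b := ⟨hcm hz, hc.1.1 hz⟩
  rw [← hd] at this; exact this

/-- If a finite graded poset `P` is shellable, then every closed interval `[a,b]`
of `P` is also shellable. -/
theorem interval_shellable_of_shellable [Fintype P] [DecidableEq P]
    (hP : ShellableIn (Set.univ : Set P)) (a b : P) (hab : a ≤ b) :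
    ShellableIn (Set.Icc a b) := by
  classical
  obtain ⟨hgrad, lt, htot, hasym, htrans, hshell⟩ := hP
  constructor
  · -- gradedness of the interval
    intro a' b' ha' hb' h c d hc hd
    have hEq : Set.Icc a b ∩ Set.Icc a' b' = Set.univ ∩ Set.Icc a' b' := by
      rw [Set.univ_inter, Set.inter_eq_self_of_subset_right (Set.Icc_subset_Icc ha'.1 hb'.2)]
    exact hgrad a' b' trivial trivial h c d (hEq ▸ hc) (hEq ▸ hd)
  -- the minimal extension of each chain of [a,b] to a maximal chain of P
  have hextEx : ∀ c : Finset P, ∃ m : Finset P, IsChainIn Set.univ c →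
      IsMaxChainIn Set.univ m ∧ c ⊆ m ∧
      ∀ m', IsMaxChainIn Set.univ m' → c ⊆ m' → m' = m ∨ lt m m' := by
    intro c
    by_cases hc : IsChainIn Set.univ c
    · obtain ⟨m0, hm0, hcm0⟩ := exists_maxChainIn Set.univ c hc
      set T : Finset (Finset P) :=
        Finset.univ.filter (fun m : Finset P => IsMaxChainIn Set.univ m ∧ c ⊆ m) with hT
      have hmemT : ∀ m : Finset P, m ∈ T ↔ IsMaxChainIn Set.univ m ∧ c ⊆ m := by
        intro m; simp [hT]
      obtain ⟨m, hmT, hmin⟩ := exists_min_rel lt htrans T ⟨m0, (hmemT m0).2 ⟨hm0, hcm0⟩⟩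
        (fun x hx y hy hxy => htot x y ((hmemT x).1 hx).1 ((hmemT y).1 hy).1 hxy)
      refine ⟨m, fun _ => ⟨((hmemT m).1 hmT).1, ((hmemT m).1 hmT).2, ?_⟩⟩
      intro m' hm' hcm'
      by_cases hmm : m' = m
      · exact Or.inl hmm
      · exact Or.inr (hmin m' ((hmemT m').2 ⟨hm', hcm'⟩) hmm)
    · exact ⟨∅, fun h => absurd h hc⟩
  choose ext hext using hextEx
  have hIccU : ∀ {c : Finset P}, IsChainIn (Set.Icc a b) c → IsChainIn Set.univ c :=
    fun h => ⟨Set.subset_univ _, h.2⟩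
  have hextP : ∀ {c : Finset P}, IsMaxChainIn (Set.Icc a b) c →
      IsMaxChainIn Set.univ (ext c) ∧ c ⊆ ext c ∧
      ∀ m', IsMaxChainIn Set.univ m' → c ⊆ m' → m' = ext c ∨ lt (ext c) m' :=
    fun hc => hext _ (hIccU hc.1)
  have hfiltercoe : ∀ m : Finset P,
      (↑(m.filter (fun z => z ∈ Set.Icc a b)) : Set P) = ↑m ∩ Set.Icc a b := by
    intro m; ext z; simp
  have hinj : ∀ {c d : Finset P}, IsMaxChainIn (Set.Icc a b) c →
      IsMaxChainIn (Set.Icc a b) d → ext c = ext d → c = d := by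
    intro c d hc hd h
    have h1 := eq_of_subset_maxChain hc (hextP hc).1.1 (hextP hc).2.1
      (hfiltercoe (ext c))
    have h2 := eq_of_subset_maxChain hd (hextP hd).1.1 (hextP hd).2.1
      (hfiltercoe (ext d))
    rw [h] at h1
    exact h1.trans h2.symm
  refine ⟨fun c d => lt (ext c) (ext d), ?_, fun c d h => hasym _ _ h,
    fun c d e h1 h2 => htrans _ _ _ h1 h2, ?_⟩
  · -- totality
    intro c d hc hd hcd
    exact htot _ _ (hextP hc).1 (hextP hd).1 (fun h => hcd (hinj hc hd h))
  · -- the shelling condition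
    intro mi mj hi hj hlt
    obtain ⟨mk', x, hk', hkj, hx, hsub, heq⟩ :=
      hshell (ext mi) (ext mj) (hextP hi).1 (hextP hj).1 hlt
    -- x ∈ mj
    have hxj : x ∈ mj := by
      by_contra hxj
      have hjk : mj ⊆ mk' := by
        intro z hz
        have hz1 : z ∈ (ext mj).erase x := Finset.mem_erase.2 ⟨fun h => hxj (h ▸ hz),
          (hextP hj).2.1 hz⟩
        rw [← heq] at hz1
        exact (Finset.mem_inter.1 hz1).1
      rcases (hextP hj).2.2 mk' hk' hjk with h | h
      · exact hasym _ _ hkj (h ▸ hkj)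
      · exact hasym _ _ hkj h
    have haij := endpoints_mem_maxChainIn hab hi
    have habj := endpoints_mem_maxChainIn hab hj
    -- a, b ∈ mi ∩ mj ⊆ mk' ∩ ext mj = (ext mj).erase x, hence x ≠ a, b and a, b ∈ mk'
    have hmm : ∀ z, z ∈ mi → z ∈ mj → z ∈ (ext mj).erase x := by
      intro z hz1 hz2
      have : z ∈ ext mi ∩ ext mj :=
        Finset.mem_inter.2 ⟨(hextP hi).2.1 hz1, (hextP hj).2.1 hz2⟩
      rw [← heq]; exact hsub this
    have haE := hmm a haij.1 habj.1
    have hbE := hmm b haij.2 habj.2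
    have hak' : a ∈ mk' := by rw [← heq] at haE; exact (Finset.mem_inter.1 haE).1
    have hbk' : b ∈ mk' := by rw [← heq] at hbE; exact (Finset.mem_inter.1 hbE).1
    set mk : Finset P := mk'.filter (fun z => z ∈ Set.Icc a b) with hmk
    have hmkMax : IsMaxChainIn (Set.Icc a b) mk :=
      maxChain_inter hk' hak' hbk' (hfiltercoe mk')
    have hmksub : mk ⊆ mk' := Finset.filter_subset _ _
    refine ⟨mk, x, hmkMax, ?_, hxj, ?_, ?_⟩
    · -- lt (ext mk) (ext mj)
      rcases (hextP hmkMax).2.2 mk' hk' hmksub with h | h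
      · exact h ▸ hkj
      · exact htrans _ _ _ h hkj
    · -- mi ∩ mj ⊆ mk ∩ mj
      intro z hz
      obtain ⟨hz1, hz2⟩ := Finset.mem_inter.1 hz
      have hzE := hmm z hz1 hz2
      have hzk' : z ∈ mk' := by rw [← heq] at hzE; exact (Finset.mem_inter.1 hzE).1
      exact Finset.mem_inter.2 ⟨Finset.mem_filter.2 ⟨hzk', hi.1.1 hz1⟩, hz2⟩
    · -- mk ∩ mj = mj.erase x
      apply Finset.Subset.antisymm
      · intro z hz
        obtain ⟨hz1, hz2⟩ := Finset.mem_inter.1 hz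
        have hzk' : z ∈ mk' := hmksub hz1
        have : z ∈ mk' ∩ ext mj := Finset.mem_inter.2 ⟨hzk', (hextP hj).2.1 hz2⟩
        rw [heq] at this
        exact Finset.mem_erase.2 ⟨(Finset.mem_erase.1 this).1, hz2⟩
      · intro z hz
        obtain ⟨hzx, hzj⟩ := Finset.mem_erase.1 hz
        have hzE : z ∈ (ext mj).erase x := Finset.mem_erase.2 ⟨hzx, (hextP hj).2.1 hzj⟩
        have hzk' : z ∈ mk' := by rw [← heq] at hzE; exact (Finset.mem_inter.1 hzE).1
        exact Finset.mem_inter.2 ⟨Finset.mem_filter.2 ⟨hzk', hj.1.1 hzj⟩, hzj⟩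
end

section
/- If a finite graded poset P is EL-shellable, then every closed interval of P is shellable. -/
variable {P : Type*} [PartialOrder P]

/-- `l` is a saturated chain from `x` to `y`, recorded as a list whose consecutive
entries are covering relations. -/
def SatFrom (x y : P) (l : List P) : Prop :=
  l.head? = some x ∧ l.getLast? = some y ∧ l.Chain' (· ⋖ ·)

/-- The label sequence of a (saturated) chain under an edge labeling `f`. -/
def labelsOf {Λ : Type*} (f : P → P → Λ) (l : List P) : List Λ :=
  List.zipWith f l l.tail

/-- `f` is an EL-labeling: in every closed interval there is a unique maximal chain
with weakly increasing labels, and its label sequence is lexicographically smallest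
among label sequences of maximal chains of the interval. -/
def IsELLabeling {Λ : Type*} [LinearOrder Λ] (f : P → P → Λ) : Prop :=
  ∀ x y : P, x ≤ y → ∃ l : List P, SatFrom x y l ∧
    (labelsOf f l).Chain' (· ≤ ·) ∧
    (∀ l' : List P, SatFrom x y l' → (labelsOf f l').Chain' (· ≤ ·) → l' = l) ∧
    (∀ l' : List P, SatFrom x y l' → l' ≠ l →
      List.Lex (· < ·) (labelsOf f l) (labelsOf f l'))

namespace ELShelling

open List

variable {P : Type*} [PartialOrder P]

/-- an auxiliary total order extending `≤`. -/
def lerel : P → P → Prop := fun x y => toLinearExtension x ≤ toLinearExtension y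

theorem lerel_of_le {x y : P} (h : x ≤ y) : lerel x y := toLinearExtension.monotone h

instance : IsTrans P lerel := ⟨fun _ _ _ h h' => le_trans h h'⟩
instance : IsAntisymm P lerel := ⟨fun x y h h' => show x = y from _root_.le_antisymm (α := LinearExtension P) h h'⟩
instance : IsTotal P lerel := ⟨fun x y => le_total (toLinearExtension x) (toLinearExtension y)⟩
noncomputable instance : DecidableRel (lerel (P := P)) := Classical.decRel _

theorem le_of_lerel {x y : P} (h : lerel x y) (hc : x ≤ y ∨ y ≤ x) : x ≤ y := by
  rcases hc with h' | h'
  · exact h'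
  · exact le_of_eq (_root_.antisymm h (lerel_of_le h'))

theorem satFrom_ne_nil {x y : P} {l : List P} (h : SatFrom x y l) : l ≠ [] := by
  intro hl; rw [hl] at h; exact absurd h.1 (by simp)

theorem satFrom_pairwise {x y : P} {l : List P} (h : SatFrom x y l) :
    l.Pairwise (· < ·) :=
  List.isChain_iff_pairwise.mp (h.2.2.imp fun _ _ hc => CovBy.lt hc)

theorem satFrom_nodup {x y : P} {l : List P} (h : SatFrom x y l) : l.Nodup :=
  (satFrom_pairwise h).imp ne_of_lt

theorem satFrom_cons_eq {x y : P} {l : List P} (h : SatFrom x y l) :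
    ∃ t, l = x :: t := by
  cases l with
  | nil => exact absurd rfl (satFrom_ne_nil h)
  | cons a t => exact ⟨t, by rw [show a = x from Option.some_injective _ h.1]⟩

theorem satFrom_concat_eq {x y : P} {l : List P} (h : SatFrom x y l) :
    ∃ u, l = u ++ [y] :=
  List.getLast?_eq_some_iff.mp h.2.1

theorem satFrom_mem_le {x y : P} {l : List P} (h : SatFrom x y l) {p : P} (hp : p ∈ l) :
    x ≤ p ∧ p ≤ y := by
  constructor
  · obtain ⟨t, rfl⟩ := (satFrom_cons_eq h)
    rcases List.mem_cons.mp hp with rfl | hp'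
    · exact le_rfl
    · exact (List.rel_of_pairwise_cons (satFrom_pairwise h) hp').le
  · obtain ⟨u, rfl⟩ := (satFrom_concat_eq h)
    rcases List.mem_append.mp hp with hp' | hp'
    · have := (satFrom_pairwise h)
      rw [List.pairwise_append] at this
      exact (this.2.2 p hp' y (List.mem_singleton_self y)).le
    · rw [List.mem_singleton.mp hp']

theorem satFrom_le {x y : P} {l : List P} (h : SatFrom x y l) : x ≤ y := by
  obtain ⟨u, rfl⟩ := (satFrom_concat_eq h)
  exact ((satFrom_mem_le h) (by simp)).1

theorem satFrom_eq_singleton {x : P} {l : List P} (h : SatFrom x x l) : l = [x] := by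
  obtain ⟨t, rfl⟩ := (satFrom_cons_eq h)
  cases t with
  | nil => rfl
  | cons p t' =>
    have h1 : x < p := List.rel_of_pairwise_cons (satFrom_pairwise h) (by simp)
    have h2 : p ≤ x := ((satFrom_mem_le h) (by simp)).2
    exact absurd (h1.trans_le h2) (lt_irrefl x)

theorem satFrom_split {x y c : P} {u v : List P} :
    SatFrom x y (u ++ c :: v) ↔ SatFrom x c (u ++ [c]) ∧ SatFrom c y (c :: v) := by
  have hhead : (u ++ c :: v).head? = (u ++ [c]).head? := by
    cases u with
    | nil => rfl
    | cons a t => simp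
  have hlast : (u ++ c :: v).getLast? = (c :: v).getLast? :=
    List.getLast?_append_of_ne_nil _ (by simp)
  have hlast2 : (u ++ [c]).getLast? = some c := by
    rw [List.getLast?_append_of_ne_nil _ (by simp : ([c] : List P) ≠ [])]; rfl
  have hchain : (u ++ c :: v).Chain' (· ⋖ ·) ↔
      (u ++ [c]).Chain' (· ⋖ ·) ∧ (c :: v).Chain' (· ⋖ ·) := by
    unfold List.Chain'
    rw [List.isChain_append, List.isChain_append]
    constructor
    · rintro ⟨h1, h2, h3⟩
      exact ⟨⟨h1, List.isChain_singleton c, by simpa using h3⟩,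
        (List.isChain_cons.mpr ⟨by simpa using (List.isChain_cons.mp h2).1,
          (List.isChain_cons.mp h2).2⟩)⟩
    · rintro ⟨⟨h1, _, h3⟩, h2⟩
      exact ⟨h1, h2, by simpa using h3⟩
  constructor
  · rintro ⟨h1, h2, h3⟩
    exact ⟨⟨by rw [← hhead]; exact h1, hlast2, (hchain.mp h3).1⟩,
      ⟨rfl, by rw [← hlast]; exact h2, (hchain.mp h3).2⟩⟩
  · rintro ⟨⟨h1, _, h3⟩, ⟨_, h2', h3'⟩⟩
    exact ⟨by rw [hhead]; exact h1, by rw [hlast]; exact h2', hchain.mpr ⟨h3, h3'⟩⟩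

theorem labelsOf_cons₂ {Λ : Type*} (f : P → P → Λ) (a b : P) (t : List P) :
    labelsOf f (a :: b :: t) = f a b :: labelsOf f (b :: t) := rfl

theorem labelsOf_split {Λ : Type*} (f : P → P → Λ) (c : P) :
    ∀ (u v : List P), labelsOf f (u ++ c :: v) = labelsOf f (u ++ [c]) ++ labelsOf f (c :: v)
  | [], v => rfl
  | [a], v => rfl
  | a :: a' :: u', v => by
    have := labelsOf_split f c (a' :: u') v
    simp only [List.cons_append] at this ⊢
    rw [labelsOf_cons₂, labelsOf_cons₂, this, List.cons_append]

theorem labelsOf_length {Λ : Type*} (f : P → P → Λ) (l : List P) :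
    (labelsOf f l).length = l.length - 1 := by
  simp [labelsOf, List.length_zipWith, List.length_tail]

end ELShelling
namespace ELShelling

open List

variable {P : Type*} [PartialOrder P]

theorem mem_of_between {z : P} :
    ∀ (t : List P) (hd : P), (hd :: t).Chain' (· ⋖ ·) →
      (∀ w ∈ hd :: t, z ≤ w ∨ w ≤ z) → hd ≤ z →
      (∀ lst ∈ (hd :: t).getLast?, z ≤ lst) → z ∈ hd :: t
  | [], hd, _, _, hhd, hlst => by
      have : z ≤ hd := hlst hd rfl
      simp [le_antisymm this hhd]
  | q :: t', hd, hch, hcomp, hhd, hlst => by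
      rcases hcomp q (by simp) with hzq | hqz
      · -- z ≤ q : z is between hd and q
        have hcov : hd ⋖ q := (List.isChain_cons_cons.mp hch).1
        rcases eq_or_lt_of_le hhd with rfl | hlt
        · simp
        · rcases eq_or_lt_of_le hzq with rfl | hlt2
          · simp
          · exact absurd hlt2 (hcov.2 hlt)
      · -- q ≤ z : recurse
        have := mem_of_between t' q (List.isChain_cons_cons.mp hch).2
          (fun w hw => hcomp w (List.mem_cons_of_mem _ hw)) hqz
          (fun lst hl => hlst lst (by simpa using hl))
        simp [List.mem_cons.mp this]

theorem satFrom_isMaxChainIn [DecidableEq P] {x y : P} {l : List P} (h : SatFrom x y l) :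
    IsMaxChainIn (Set.Icc x y) l.toFinset := by
  have hmem : ∀ {p : P}, p ∈ l.toFinset ↔ p ∈ l := List.mem_toFinset
  constructor
  · constructor
    · intro p hp
      have : p ∈ l := hmem.mp hp
      exact Set.mem_Icc.mpr (satFrom_mem_le h this)
    · intro p hp q hq hne
      have hpl : p ∈ l := hmem.mp hp
      have hql : q ∈ l := hmem.mp hq
      have hpw : l.Pairwise (fun a b => a ≤ b ∨ b ≤ a) :=
        (satFrom_pairwise h).imp fun hab => Or.inl hab.le
      exact (haveI : Std.Symm (fun a b : P => a ≤ b ∨ b ≤ a) := ⟨fun a b h => h.symm⟩; hpw.forall hpl hql hne)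
  · intro d hd hsub
    refine Finset.Subset.antisymm hsub fun z hz => ?_
    obtain ⟨t, rfl⟩ := satFrom_cons_eq h
    have hzI : z ∈ Set.Icc x y := hd.1 hz
    have hcomp : ∀ w ∈ x :: t, z ≤ w ∨ w ≤ z := by
      intro w hw
      rcases eq_or_ne z w with rfl | hne
      · exact Or.inl le_rfl
      · exact hd.2 (hz : z ∈ (d : Set P)) (hsub (hmem.mpr hw) : w ∈ (d : Set P)) hne
    have hlst : ∀ lst ∈ (x :: t).getLast?, z ≤ lst := by
      intro lst hl
      rw [h.2.1, Option.mem_def] at hl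
      obtain rfl : y = lst := Option.some_injective _ hl
      exact hzI.2
    exact hmem.mpr (mem_of_between t x h.2.2 hcomp hzI.1 hlst)

theorem maxChainIn_mem_ends [DecidableEq P] {x y : P} (hxy : x ≤ y) {c : Finset P}
    (hc : IsMaxChainIn (Set.Icc x y) c) : x ∈ c ∧ y ∈ c := by
  constructor
  · have h1 : IsChainIn (Set.Icc x y) (insert x c) := by
      constructor
      · rw [Finset.coe_insert]
        exact Set.insert_subset (Set.mem_Icc.mpr ⟨le_rfl, hxy⟩) hc.1.1
      · rw [Finset.coe_insert]
        exact hc.1.2.insert fun w hw _ => Or.inl (hc.1.1 hw).1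
    have := hc.2 _ h1 (Finset.subset_insert x c)
    rw [this]; exact Finset.mem_insert_self x c
  · have h1 : IsChainIn (Set.Icc x y) (insert y c) := by
      constructor
      · rw [Finset.coe_insert]
        exact Set.insert_subset (Set.mem_Icc.mpr ⟨hxy, le_rfl⟩) hc.1.1
      · rw [Finset.coe_insert]
        exact hc.1.2.insert fun w hw _ => Or.inr (hc.1.1 hw).2
    have := hc.2 _ h1 (Finset.subset_insert y c)
    rw [this]; exact Finset.mem_insert_self y c

/-- The list of elements of a finset, sorted along `lerel`. -/
noncomputable def chainList (c : Finset P) : List P := c.sort lerel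

theorem maxChainIn_satFrom [DecidableEq P] {x y : P} (hxy : x ≤ y) {c : Finset P}
    (hc : IsMaxChainIn (Set.Icc x y) c) : SatFrom x y (chainList c) ∧ (chainList c).toFinset = c := by
  set l : List P := chainList c with hl
  have hsort : l.Pairwise lerel := Finset.pairwise_sort _ _
  have hnd : l.Nodup := Finset.sort_nodup _ _
  have hmem : ∀ {p : P}, p ∈ l ↔ p ∈ c := Finset.mem_sort _
  have htf : l.toFinset = c := Finset.sort_toFinset _ _
  have hIcc : ∀ p ∈ l, x ≤ p ∧ p ≤ y := fun p hp =>
    Set.mem_Icc.mp (hc.1.1 (hmem.mp hp : p ∈ (c : Set P)))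
  have hcomp : ∀ p ∈ l, ∀ q ∈ l, p ≠ q → p ≤ q ∨ q ≤ p := fun p hp q hq hne =>
    hc.1.2 (hmem.mp hp : p ∈ (c : Set P)) (hmem.mp hq : q ∈ (c : Set P)) hne
  have hlt : l.Pairwise (· < ·) := by
    rw [List.pairwise_iff_get] at hsort
    rw [List.pairwise_iff_get]
    intro i j hij
    have hne : l.get i ≠ l.get j := fun he =>
      absurd (Fin.val_eq_of_eq (hnd.get_inj_iff.mp he)) (Nat.ne_of_lt hij)
    have hle := le_of_lerel (hsort i j hij)
      (hcomp _ (l.get_mem i) _ (l.get_mem j) hne)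
    exact hle.lt_of_ne hne
  have hxc : x ∈ c := (maxChainIn_mem_ends hxy hc).1
  have hyc : y ∈ c := (maxChainIn_mem_ends hxy hc).2
  have hist : ∀ (i j : Fin l.length), (i : ℕ) < j → l.get i < l.get j :=
    List.pairwise_iff_get.mp hlt
  -- head
  have hhead : l.head? = some x := by
    cases hl' : l with
    | nil => rw [hl'] at hmem; exact absurd (hmem.mpr hxc) List.not_mem_nil
    | cons p t =>
      have hxl : x ∈ l := hmem.mpr hxc
      rw [hl'] at hxl
      rcases List.mem_cons.mp hxl with rfl | hxt
      · rfl
      · have hpl : p ∈ l := by rw [hl']; simp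
        have hpx : p < x := by
          rw [hl'] at hlt; exact List.rel_of_pairwise_cons hlt hxt
        exact absurd ((hIcc p hpl).1.trans_lt hpx) (lt_irrefl x)
  -- last
  have hlast : l.getLast? = some y := by
    rcases List.eq_nil_or_concat l with hl' | ⟨u, q, hl'⟩
    · rw [hl'] at hmem; exact absurd (hmem.mpr hxc) List.not_mem_nil
    · rw [List.concat_eq_append] at hl'
      have hql : q ∈ l := by rw [hl']; simp
      have hyl : y ∈ l := hmem.mpr hyc
      rw [hl'] at hyl
      rcases List.mem_append.mp hyl with hyu | hyq
      · have : y < q := by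
          rw [hl', List.pairwise_append] at hlt
          exact hlt.2.2 y hyu q (by simp)
        exact absurd (this.trans_le (hIcc q hql).2) (lt_irrefl y)
      · obtain rfl : y = q := List.mem_singleton.mp hyq
        rw [hl']; simp
  -- covers
  have hcov : l.Chain' (· ⋖ ·) := by
    unfold List.Chain'
    rw [List.isChain_iff_getElem]
    intro i hi
    change l.get ⟨i, by omega⟩ ⋖ l.get ⟨i + 1, hi⟩
    set u := l.get ⟨i, by omega⟩ with hu
    set v := l.get ⟨i + 1, by omega⟩ with hv
    have huv : u < v := hist _ _ (show i < i + 1 by omega)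
    by_contra hnc
    obtain ⟨z, hz1, hz2⟩ := exists_lt_lt_of_not_covBy huv hnc
    have hzc : z ∉ c := by
      intro hzc
      obtain ⟨j, hj⟩ := List.mem_iff_get.mp (hmem.mpr hzc)
      rcases Nat.lt_trichotomy (j : ℕ) i with hji | hji | hij
      · exact absurd ((hj ▸ hist j ⟨i, by omega⟩ hji : z < u).trans hz1) (lt_irrefl z)
      · have : z = u := by rw [← hj, hu]; congr 1; exact Fin.ext hji
        exact absurd (this ▸ hz1) (lt_irrefl z)
      · rcases Nat.lt_or_ge (j : ℕ) (i + 2) with hj2 | hj2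
        · have hji1 : (j : ℕ) = i + 1 := by omega
          have : z = v := by rw [← hj, hv]; congr 1; exact Fin.ext hji1
          exact absurd (this ▸ hz2) (lt_irrefl z)
        · have : v < z := hj ▸ hist ⟨i + 1, by omega⟩ j (show i + 1 < (j : ℕ) by omega)
          exact absurd (this.trans hz2) (lt_irrefl v)
    have hul : u ∈ l := l.get_mem _
    have hvl : v ∈ l := l.get_mem _
    have h1 : IsChainIn (Set.Icc x y) (insert z c) := by
      constructor
      · rw [Finset.coe_insert]
        exact Set.insert_subset
          (Set.mem_Icc.mpr ⟨(hIcc u hul).1.trans hz1.le, hz2.le.trans (hIcc v hvl).2⟩) hc.1.1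
      · rw [Finset.coe_insert]
        refine hc.1.2.insert fun w hw _ => ?_
        obtain ⟨j, hj⟩ := List.mem_iff_get.mp (hmem.mpr hw)
        rcases Nat.lt_or_ge (j : ℕ) (i + 1) with hji | hji
        · rcases Nat.lt_or_ge (j : ℕ) i with hji' | hji'
          · exact Or.inr ((hj ▸ hist j ⟨i, by omega⟩ hji').le.trans hz1.le)
          · have : w = u := by rw [← hj, hu]; congr 1; exact Fin.ext (show (j:ℕ) = i by omega)
            exact Or.inr (this ▸ hz1.le)
        · rcases Nat.lt_or_ge (i + 1) (j : ℕ) with hji' | hji'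
          · exact Or.inl (hz2.le.trans (hj ▸ hist ⟨i + 1, by omega⟩ j (show i + 1 < (j : ℕ) by omega)).le)
          · have : w = v := by rw [← hj, hv]; congr 1; exact Fin.ext (show (j:ℕ) = i + 1 by omega)
            exact Or.inl (this ▸ hz2.le)
    have := hc.2 _ h1 (Finset.subset_insert z c)
    exact hzc (by rw [this]; exact Finset.mem_insert_self z c)
  exact ⟨⟨hhead, hlast, hcov⟩, htf⟩

theorem chainList_satFrom_inv [DecidableEq P] {l : List P} {x y : P} (h : SatFrom x y l) :
    chainList l.toFinset = l := by
  have hsorted : l.Pairwise lerel :=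
    List.Pairwise.imp (fun hab => lerel_of_le hab.le) (satFrom_pairwise h)
  exact (List.toFinset_sort lerel (satFrom_nodup h)).mpr hsorted

end ELShelling
namespace ELShelling

open List

variable {P : Type*} [PartialOrder P]

theorem lex_append_right {α : Type*} {r : α → α → Prop} (w : List α) {s t : List α}
    (h : List.Lex r s t) : List.Lex r (w ++ s) (w ++ t) := by
  induction w with
  | nil => exact h
  | cons a w ih => exact List.Lex.cons ih

theorem lex_append_of_length_eq {α : Type*} {r : α → α → Prop} :
    ∀ {s t : List α}, List.Lex r s t → s.length = t.length →
      ∀ (u v : List α), List.Lex r (s ++ u) (t ++ v)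
  | _, _, List.Lex.nil, hlen, _, _ => by simp at hlen
  | _, _, List.Lex.cons h, hlen, u, v =>
      List.Lex.cons (lex_append_of_length_eq h (by simpa using hlen) u v)
  | _, _, List.Lex.rel hr, _, u, v => List.Lex.rel hr

theorem lex_trans {α : Type*} {r : α → α → Prop} [IsTrichotomous α r] [IsAsymm α r]
    [IsOrderConnected α r] {a b c : List α}
    (h1 : List.Lex r a b) (h2 : List.Lex r b c) : List.Lex r a c := by
  rcases trichotomous_of (List.Lex r) a c with h | rfl | h
  · exact h
  · exact absurd h2 (asymm h1)
  · rcases IsOrderConnected.conn c b a h with h' | h'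
    · exact absurd h' (asymm h2)
    · exact absurd h' (asymm h1)

theorem satFrom_length_eq [DecidableEq P] (hgraded : GradedIn (Set.univ : Set P))
    {x y : P} {l l' : List P} (h : SatFrom x y l) (h' : SatFrom x y l') :
    l.length = l'.length := by
  have h1 := satFrom_isMaxChainIn h
  have h2 := satFrom_isMaxChainIn h'
  have := hgraded x y (Set.mem_univ x) (Set.mem_univ y) (satFrom_le h)
    l.toFinset l'.toFinset (by rwa [Set.univ_inter]) (by rwa [Set.univ_inter])
  rwa [List.toFinset_card_of_nodup (satFrom_nodup h),
    List.toFinset_card_of_nodup (satFrom_nodup h')] at this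

theorem labelsOf_cons_head {Λ : Type*} (f : P → P → Λ) (p : P) {l : List P} {q : P}
    (hq : l.head? = some q) : labelsOf f (p :: l) = f p q :: labelsOf f l := by
  cases l with
  | nil => exact absurd hq (by simp)
  | cons a t =>
    obtain rfl : a = q := by injection hq
    rfl

theorem head?_append_cons {α : Type*} (u : List α) (c : α) (v v' : List α) :
    (u ++ c :: v).head? = (u ++ c :: v').head? := by cases u <;> rfl

theorem exists_descent {Λ : Type*} [LinearOrder Λ] (f : P → P → Λ) :
    ∀ (t : List P) (p q : P), ¬ (labelsOf f (p :: q :: t)).Chain' (· ≤ ·) →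
      ∃ w x1 x2 x3 v, p :: q :: t = w ++ x1 :: x2 :: x3 :: v ∧
        (labelsOf f (w ++ [x1, x2])).Chain' (· ≤ ·) ∧ f x2 x3 < f x1 x2
  | [], p, q, h => absurd (List.isChain_singleton _) h
  | c :: t', p, q, h => by
    by_cases hab : f p q ≤ f q c
    · have h' : ¬ (labelsOf f (q :: c :: t')).Chain' (· ≤ ·) := by
        intro hc
        exact h (by rw [labelsOf_cons₂]; exact List.isChain_cons_cons.mpr ⟨hab, hc⟩)
      obtain ⟨w, x1, x2, x3, v, heq, hch, hdes⟩ := exists_descent f t' q c h'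
      refine ⟨p :: w, x1, x2, x3, v, by rw [List.cons_append, ← heq], ?_, hdes⟩
      cases w with
      | nil =>
        obtain ⟨rfl, rfl, -⟩ : x1 = q ∧ x2 = c ∧ x3 :: v = t' := by
          simpa using heq.symm
        exact List.isChain_pair.mpr hab
      | cons b' w' =>
        obtain ⟨hb', htl⟩ : b' = q ∧ w' ++ x1 :: x2 :: x3 :: v = c :: t' := by
          simpa using heq.symm
        have hc1 : (w' ++ [x1, x2]).head? = some c := by
          rw [head?_append_cons w' x1 [x2] (x2 :: x3 :: v), htl]; rfl
        have e1 : labelsOf f (b' :: (w' ++ [x1, x2])) = f b' c :: labelsOf f (w' ++ [x1, x2]) :=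
          labelsOf_cons_head f b' hc1
        have goal1 : labelsOf f (p :: (b' :: (w' ++ [x1, x2]))) =
            f p b' :: labelsOf f (b' :: (w' ++ [x1, x2])) := labelsOf_cons_head f p rfl
        show (labelsOf f (p :: (b' :: (w' ++ [x1, x2])))).Chain' (· ≤ ·)
        rw [goal1]
        apply List.isChain_cons.mpr
        refine ⟨fun lab hlab => ?_, by rw [List.cons_append] at hch; exact hch⟩
        rw [e1] at hlab
        obtain rfl : f b' c = lab := Option.some_injective _ (Option.mem_def.mp hlab)
        rw [hb']
        exact hab
    · exact ⟨[], p, q, c, t', rfl, List.isChain_singleton _, lt_of_not_ge hab⟩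

end ELShelling
namespace ELShelling

open List

variable {P : Type*} [PartialOrder P]

theorem labelsOf_split₂ {Λ : Type*} (f : P → P → Λ) (w : List P) (x1 x2 : P) (v : List P) :
    labelsOf f (w ++ x1 :: x2 :: v) = labelsOf f (w ++ [x1, x2]) ++ labelsOf f (x2 :: v) := by
  rw [labelsOf_split f x1 w (x2 :: v), labelsOf_cons₂,
    show (w ++ [x1, x2] : List P) = w ++ x1 :: [x2] from rfl, labelsOf_split f x1 w [x2]]
  show _ ++ _ :: _ = (_ ++ [f x1 x2]) ++ _
  simp

theorem heads2_eq {α : Type*} (u : List α) (hu : 2 ≤ u.length) {a b c d : α}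
    {t1 t2 r s : List α}
    (h1 : a :: b :: t1 = u ++ r) (h2 : c :: d :: t2 = u ++ s) : a = c ∧ b = d := by
  match u, hu with
  | e :: e' :: u', _ =>
    simp only [List.cons_append] at h1 h2
    injection h1 with h1a h1b
    injection h1b with h1c h1d
    injection h2 with h2a h2b
    injection h2b with h2c h2d
    exact ⟨h1a.trans h2a.symm, h1c.trans h2c.symm⟩

theorem core [DecidableEq P] (hgraded : GradedIn (Set.univ : Set P))
    {Λ : Type*} [LinearOrder Λ] {f : P → P → Λ} (hf : IsELLabeling f) {b : P} :
    ∀ (lj : List P) {li : List P} {x : P}, SatFrom x b li → SatFrom x b lj → li ≠ lj →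
      ¬ List.Lex (· < ·) (labelsOf f lj) (labelsOf f li) →
      ∃ (lk : List P) (y : P), SatFrom x b lk ∧
        List.Lex (· < ·) (labelsOf f lk) (labelsOf f lj) ∧
        y ∈ lj ∧ y ∉ li ∧ lk.toFinset ∩ lj.toFinset = lj.toFinset.erase y := by
  intro lj
  induction lj with
  | nil => intro li x hi hj _ _; exact absurd rfl (satFrom_ne_nil hj)
  | cons hd t ih =>
    intro li x hi hj hne hlex
    have hhd : x = hd := by
      have := hj.1; simp at this; exact this.symm
    subst hhd
    obtain ⟨ti, rfl⟩ := satFrom_cons_eq hi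
    cases ti with
    | nil =>
      have hxb : x = b := by have := hi.2.1; simpa using this
      subst hxb
      exact absurd (satFrom_eq_singleton hj).symm hne
    | cons p ti' =>
    cases t with
    | nil =>
      have hxb : x = b := by have := hj.2.1; simpa using this
      subst hxb
      exact absurd (satFrom_eq_singleton hi) hne
    | cons q tj' =>
    obtain ⟨hsjx, hsjq⟩ := (satFrom_split (u := [x]) (c := q) (v := tj')).mp hj
    obtain ⟨hsix, hsip⟩ := (satFrom_split (u := [x]) (c := p) (v := ti')).mp hi
    have hxp : x < p := ((List.isChain_cons_cons.mp hi.2.2).1).lt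
    by_cases hpq : p = q
    · -- Case A: equal second elements, recurse
      subst hpq
      have hti_ne : (p :: ti') ≠ (p :: tj') := fun h => hne (by rw [h])
      have hlex' : ¬ List.Lex (· < ·) (labelsOf f (p :: tj')) (labelsOf f (p :: ti')) := by
        intro hl
        exact hlex (by
          rw [labelsOf_cons₂, labelsOf_cons₂]
          exact List.Lex.cons hl)
      obtain ⟨lk', y, hk's, hk'lex, hyj, hyi, hint⟩ := ih hsip hsjq hti_ne hlex'
      obtain ⟨lk'', hlk'⟩ := satFrom_cons_eq hk's
      have hsatk : SatFrom x b (x :: lk') := by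
        rw [hlk']
        exact (satFrom_split (u := [x]) (c := p) (v := lk'')).mpr
          ⟨hsix, by rw [← hlk']; exact hk's⟩
      have hyx : y ≠ x := by
        intro h
        subst h
        exact absurd ((satFrom_mem_le hsjq hyj).1) (not_le_of_gt hxp)
      have hxlk : x ∉ lk' := fun hx =>
        absurd ((satFrom_mem_le hk's hx).1) (not_le_of_gt hxp)
      have hxtj : x ∉ p :: tj' := fun hx =>
        absurd ((satFrom_mem_le hsjq hx).1) (not_le_of_gt hxp)
      refine ⟨x :: lk', y, hsatk, ?_, List.mem_cons_of_mem _ hyj, ?_, ?_⟩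
      · rw [labelsOf_cons_head f x (show lk'.head? = some p by rw [hlk']; rfl),
          labelsOf_cons₂]
        exact List.Lex.cons hk'lex
      · intro hmem
        rcases List.mem_cons.mp hmem with h | h
        · exact hyx h
        · exact hyi h
      · show (x :: lk').toFinset ∩ (x :: p :: tj').toFinset
          = ((x :: p :: tj').toFinset).erase y
        rw [List.toFinset_cons, List.toFinset_cons (a := x),
          ← Finset.insert_inter_distrib, hint, Finset.erase_insert_of_ne hyx.symm]
    · -- Case B: second elements differ; find a descent
      have hxb : x ≤ b := satFrom_le hj
      have hnotinc : ¬ (labelsOf f (x :: q :: tj')).Chain' (· ≤ ·) := by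
        intro hinc
        obtain ⟨l0, hl0, hinc0, huniq, hmin⟩ := hf x b hxb
        have hj0 : x :: q :: tj' = l0 := huniq _ hj hinc
        have hne0 : (x :: p :: ti') ≠ l0 := by rw [← hj0]; exact hne
        have := hmin _ hi hne0
        rw [← hj0] at this
        exact hlex this
      obtain ⟨w, x1, x2, x3, v, heq, hch, hdes⟩ := exists_descent f tj' x q hnotinc
      have hj' := hj
      rw [heq] at hj'
      obtain ⟨S1, S2⟩ := (satFrom_split (u := w) (c := x1) (v := x2 :: x3 :: v)).mp hj'
      obtain ⟨S3, S4⟩ := (satFrom_split (u := [x1, x2]) (c := x3) (v := v)).mp S2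
      have P1 : SatFrom x x2 (w ++ [x1, x2]) := by
        have h' : SatFrom x b ((w ++ [x1]) ++ x2 :: x3 :: v) := by
          rw [List.append_assoc, List.singleton_append]; exact hj'
        have := ((satFrom_split (u := w ++ [x1]) (c := x2) (v := x3 :: v)).mp h').1
        rwa [List.append_assoc, List.singleton_append] at this
      -- x2 does not lie on li
      have hx2li : x2 ∉ (x :: p :: ti') := by
        intro hmem
        obtain ⟨ui, vi, hsplit⟩ := List.append_of_mem hmem
        have hi' := hi
        rw [hsplit] at hi'
        obtain ⟨Q1, Q2⟩ := (satFrom_split (u := ui) (c := x2) (v := vi)).mp hi'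
        have hlenp : (ui ++ [x2]).length = (w ++ [x1, x2]).length :=
          satFrom_length_eq hgraded Q1 P1
        have hpij : ui ++ [x2] ≠ w ++ [x1, x2] := by
          intro hpp
          have hli2 : x :: p :: ti' = (w ++ [x1, x2]) ++ vi := by
            rw [hsplit, ← hpp]; simp
          have hlj2 : x :: q :: tj' = (w ++ [x1, x2]) ++ x3 :: v := by
            rw [heq]; simp
          have h2le : 2 ≤ (w ++ [x1, x2]).length := by simp
          exact hpq (heads2_eq _ h2le hli2 hlj2).2
        obtain ⟨l0, hl0, hinc0, huniq, hmin⟩ := hf x x2 (satFrom_le P1)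
        have hpj0 : w ++ [x1, x2] = l0 := huniq _ P1 hch
        have hlexp : List.Lex (· < ·) (labelsOf f (w ++ [x1, x2])) (labelsOf f (ui ++ [x2])) := by
          rw [hpj0]
          exact hmin _ Q1 (by rw [← hpj0]; exact hpij)
        apply hlex
        rw [heq, hsplit, labelsOf_split₂ f w x1 x2 (x3 :: v), labelsOf_split f x2 ui vi]
        refine lex_append_of_length_eq hlexp ?_ _ _
        rw [labelsOf_length, labelsOf_length, hlenp]
      -- the increasing chain of the rank-two interval [x1, x3]
      have hx1x3 : x1 ≤ x3 := satFrom_le S3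
      obtain ⟨l0, hl00, hinc0, huniq, hmin⟩ := hf x1 x3 hx1x3
      have hmne : [x1, x2, x3] ≠ l0 := by
        intro hm
        rw [← hm] at hinc0
        exact absurd hdes (not_lt.mpr (List.isChain_pair.mp hinc0))
      have hlex0 : List.Lex (· < ·) (labelsOf f l0) (labelsOf f [x1, x2, x3]) := hmin _ S3 hmne
      have hlen0 : l0.length = 3 := by
        rw [satFrom_length_eq hgraded hl00 S3]; rfl
      obtain ⟨e1', z, e3', hl0e⟩ : ∃ a c d, l0 = [a, c, d] := by
        match l0, hlen0 with
        | [a, c, d], _ => exact ⟨a, c, d, rfl⟩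
      have he1 : e1' = x1 := by
        have h1 := hl00.1
        rw [hl0e] at h1
        injection h1
      have he3 : e3' = x3 := by
        have h3 := hl00.2.1
        rw [hl0e, show ([e1', z, e3'] : List P).getLast? = some e3' from rfl] at h3
        injection h3
      have hl0e' : l0 = [x1, z, x3] := by rw [hl0e, he1, he3]
      rw [hl0e'] at hl00 hlex0 hmne
      have hzx2 : z ≠ x2 := fun h => hmne (by rw [h])
      have hx1z : x1 ⋖ z := (List.isChain_cons_cons.mp hl00.2.2).1
      have hzx3 : z ⋖ x3 := (List.isChain_cons_cons.mp (List.isChain_cons_cons.mp hl00.2.2).2).1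
      -- assemble the new chain
      have hKz : SatFrom x1 b (x1 :: z :: x3 :: v) :=
        (satFrom_split (u := [x1, z]) (c := x3) (v := v)).mpr ⟨hl00, S4⟩
      have hsatk : SatFrom x b (w ++ x1 :: z :: x3 :: v) :=
        (satFrom_split (u := w) (c := x1) (v := z :: x3 :: v)).mpr ⟨S1, hKz⟩
      have e2 : labelsOf f (x1 :: z :: x3 :: v)
          = labelsOf f [x1, z, x3] ++ labelsOf f (x3 :: v) := labelsOf_split f x3 [x1, z] v
      have e3 : labelsOf f (x1 :: x2 :: x3 :: v)
          = labelsOf f [x1, x2, x3] ++ labelsOf f (x3 :: v) := labelsOf_split f x3 [x1, x2] v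
      have hlexk : List.Lex (· < ·) (labelsOf f (w ++ x1 :: z :: x3 :: v))
          (labelsOf f (x :: q :: tj')) := by
        rw [heq, labelsOf_split f x1 w (z :: x3 :: v), labelsOf_split f x1 w (x2 :: x3 :: v)]
        apply lex_append_right
        rw [e2, e3]
        exact lex_append_of_length_eq hlex0 rfl _ _
      -- the pairwise facts about lj
      have hpwj : (w ++ x1 :: x2 :: x3 :: v).Pairwise (· < ·) := satFrom_pairwise hj'
      rw [List.pairwise_append] at hpwj
      obtain ⟨hpw_w, hpw_r, hpw_cross⟩ := hpwj
      have hx1x2 : x1 < x2 := List.rel_of_pairwise_cons hpw_r (by simp)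
      have hx2x3 : x2 < x3 := List.rel_of_pairwise_cons hpw_r.tail (by simp)
      have hvgt : ∀ pp ∈ v, x3 < pp := fun pp hpp =>
        List.rel_of_pairwise_cons hpw_r.tail.tail hpp
      have hwlt : ∀ pp ∈ w, pp < x1 := fun pp hpp => hpw_cross pp hpp x1 (by simp)
      have hzlj : z ∉ w ++ x1 :: x2 :: x3 :: v := by
        intro hz
        rcases List.mem_append.mp hz with h | h
        · exact absurd (hwlt z h) (lt_asymm hx1z.lt)
        · simp only [List.mem_cons] at h
          rcases h with h | h | h | h
          · exact absurd (h ▸ hx1z.lt) (lt_irrefl _)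
          · exact hzx2 h
          · exact absurd (h ▸ hzx3.lt) (lt_irrefl _)
          · exact absurd ((hzx3.lt).trans (hvgt z h)) (lt_irrefl z)
      have hx2lk : x2 ∉ w ++ x1 :: z :: x3 :: v := by
        intro hz
        rcases List.mem_append.mp hz with h | h
        · exact absurd ((hwlt x2 h).trans hx1x2) (lt_irrefl x2)
        · simp only [List.mem_cons] at h
          rcases h with h | h | h | h
          · exact absurd (h ▸ hx1x2) (lt_irrefl _)
          · exact hzx2 h.symm
          · exact absurd (h ▸ hx2x3) (lt_irrefl _)
          · exact absurd (hx2x3.trans (hvgt x2 h)) (lt_irrefl x2)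
      refine ⟨w ++ x1 :: z :: x3 :: v, x2, hsatk, hlexk, by rw [heq]; simp, hx2li, ?_⟩
      rw [heq]
      ext pp
      simp only [Finset.mem_inter, List.mem_toFinset, Finset.mem_erase,
        List.mem_append, List.mem_cons]
      constructor
      · rintro ⟨hk, hjm⟩
        refine ⟨fun hcon => ?_, hjm⟩
        subst hcon
        exact hx2lk (List.mem_append.mpr (by simpa using hk))
      · rintro ⟨hne', hjm⟩
        refine ⟨?_, hjm⟩
        rcases hjm with h | h | h | h | h
        · exact Or.inl h
        · exact Or.inr (Or.inl h)
        · exact absurd h hne'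
        · exact Or.inr (Or.inr (Or.inr (Or.inl h)))
        · exact Or.inr (Or.inr (Or.inr (Or.inr h)))

end ELShelling
/-- If a finite graded poset is EL-shellable, then every closed interval is shellable. -/
theorem interval_shellable_of_EL [Fintype P] [DecidableEq P]
    (hgraded : GradedIn (Set.univ : Set P))
    {Λ : Type*} [LinearOrder Λ] (f : P → P → Λ) (hf : IsELLabeling f)
    (a b : P) (hab : a ≤ b) : ShellableIn (Set.Icc a b) := by
  classical
  constructor
  · -- the interval is graded
    intro a' b' ha' hb' hab' c d hc hd
    have hsub : Set.Icc a' b' ⊆ Set.Icc a b := Set.Icc_subset_Icc ha'.1 hb'.2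
    have heq : Set.Icc a b ∩ Set.Icc a' b' = Set.Icc a' b' :=
      Set.inter_eq_self_of_subset_right hsub
    rw [heq] at hc hd
    exact hgraded a' b' (Set.mem_univ a') (Set.mem_univ b') hab' c d
      (by rwa [Set.univ_inter]) (by rwa [Set.univ_inter])
  · -- the lexicographic order on maximal chains is a shelling order
    set L : Finset P → List Λ := fun c => labelsOf f (ELShelling.chainList c) with hL
    set lt : Finset P → Finset P → Prop := fun c d =>
      List.Lex (· < ·) (L c) (L d) ∨ (L c = L d ∧ WellOrderingRel c d) with hlt
    have lex_asymm : ∀ {s t : List Λ},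
        List.Lex (· < ·) s t → ¬ List.Lex (· < ·) t s := fun h h' => asymm h h'
    have lex_irrefl : ∀ (s : List Λ), ¬ List.Lex (· < ·) s s := fun s h => lex_asymm h h
    have wo_asymm : ∀ {c d : Finset P}, WellOrderingRel c d → ¬ WellOrderingRel d c :=
      fun h h' => asymm h h'
    have lt_asym : ∀ c d, lt c d → ¬ lt d c := by
      intro c d h1 h2
      rcases h1 with h1 | ⟨he1, hw1⟩ <;> rcases h2 with h2 | ⟨he2, hw2⟩
      · exact lex_asymm h1 h2
      · rw [he2] at h1; exact lex_irrefl _ h1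
      · rw [he1] at h2; exact lex_irrefl _ h2
      · exact wo_asymm hw1 hw2
    haveI : IsTrichotomous Λ (· < ·) := ⟨fun a b h1 h2 => le_antisymm (not_lt.mp h2) (not_lt.mp h1)⟩
    haveI : IsTrichotomous (List Λ) (List.Lex (· < ·)) := List.Lex.trichotomous _
    have lt_total : ∀ c d : Finset P, c ≠ d → lt c d ∨ lt d c := by
      intro c d hne
      rcases trichotomous_of (List.Lex (· < ·)) (L c) (L d) with h | h | h
      · exact Or.inl (Or.inl h)
      · rcases trichotomous_of WellOrderingRel c d with hw | hw | hw
        · exact Or.inl (Or.inr ⟨h, hw⟩)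
        · exact absurd hw hne
        · exact Or.inr (Or.inr ⟨h.symm, hw⟩)
      · exact Or.inr (Or.inl h)
    have lt_trans : ∀ c d e, lt c d → lt d e → lt c e := by
      intro c d e h1 h2
      rcases h1 with h1 | ⟨he1, hw1⟩ <;> rcases h2 with h2 | ⟨he2, hw2⟩
      · exact Or.inl (ELShelling.lex_trans h1 h2)
      · exact Or.inl (he2 ▸ h1)
      · exact Or.inl (he1 ▸ h2)
      · exact Or.inr ⟨he1.trans he2, trans_of WellOrderingRel hw1 hw2⟩
    refine ⟨lt, fun c d hc hd hne => lt_total c d hne, lt_asym, lt_trans, ?_⟩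
    intro mi mj hmi hmj hltij
    obtain ⟨hsi, hti⟩ := ELShelling.maxChainIn_satFrom hab hmi
    obtain ⟨hsj, htj⟩ := ELShelling.maxChainIn_satFrom hab hmj
    set li : List P := ELShelling.chainList mi
    set lj : List P := ELShelling.chainList mj
    have hmij : mi ≠ mj := by
      rintro rfl
      rcases hltij with h | ⟨_, hw⟩
      · exact lex_irrefl _ h
      · exact wo_asymm hw hw
    have hlij : li ≠ lj := fun h => hmij (by rw [← hti, ← htj, h])
    have hnlex : ¬ List.Lex (· < ·) (labelsOf f lj) (labelsOf f li) := by
      rcases hltij with h | ⟨he, _⟩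
      · exact lex_asymm h
      · intro h'
        have he' : labelsOf f li = labelsOf f lj := he
        rw [he'] at h'
        exact lex_irrefl _ h'
    obtain ⟨lk, y, hsatk, hlexk, hyj, hyi, hint⟩ :=
      ELShelling.core hgraded hf lj hsi hsj hlij hnlex
    refine ⟨lk.toFinset, y, ELShelling.satFrom_isMaxChainIn hsatk, ?_, ?_, ?_, ?_⟩
    · left
      show List.Lex (· < ·) (labelsOf f (ELShelling.chainList lk.toFinset)) (labelsOf f lj)
      rw [ELShelling.chainList_satFrom_inv hsatk]
      exact hlexk
    · rw [← htj]
      exact List.mem_toFinset.mpr hyj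
    · intro p hp
      rw [Finset.mem_inter] at hp
      have hplj : p ∈ lj.toFinset := by rw [htj]; exact hp.2
      have hpy : p ≠ y := by
        rintro rfl
        exact hyi (List.mem_toFinset.mp (by rw [hti]; exact hp.1))
      rw [← htj, hint]
      exact Finset.mem_erase.mpr ⟨hpy, hplj⟩
    · rw [← htj, hint]
end

section
/- Let D be a nontrivial positive domain from generator x to generator y in a grid diagram, and suppose D has nonzero coefficient at the square immediately to the top-right of some coordinate x₁ of x. Then D contains (as 2-chains) a rectangle whose bottom-left corner is x₁ and whose top-right corner is another coordinate of x. -/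
open scoped Classical

/-- The indicator 2-chain of the coordinates of a generator `x` (a bijection of
`Fin n`), in the planar picture: the point `(i, x i)` for each `i`. -/
noncomputable def genInd (n : ℕ) (x : Fin n → Fin n) : ℤ × ℤ → ℤ := fun p =>
  if ∃ i : Fin n, (i : ℤ) = p.1 ∧ ((x i : ℤ) = p.2) then 1 else 0

/-- The mixed second difference of a planar 2-chain at a lattice point. -/
def delta (D : ℤ × ℤ → ℤ) (p : ℤ × ℤ) : ℤ :=
  D p - D (p.1 - 1, p.2) - D (p.1, p.2 - 1) + D (p.1 - 1, p.2 - 1)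

noncomputable def cnt (n : ℕ) (z : Fin n → Fin n) (i j : ℤ) : ℤ :=
  ((Finset.univ.filter (fun k : Fin n => (k : ℤ) ≤ i ∧ (z k : ℤ) ≤ j)).card : ℤ)

lemma cnt_sum (n : ℕ) (z : Fin n → Fin n) (i j : ℤ) :
    cnt n z i j = ∑ k : Fin n, (if (k : ℤ) ≤ i ∧ (z k : ℤ) ≤ j then (1:ℤ) else 0) := by
  rw [cnt, Finset.card_filter, Nat.cast_sum]
  refine Finset.sum_congr rfl fun k _ => ?_
  split_ifs <;> simp

lemma genInd_sum (n : ℕ) (z : Fin n → Fin n) (p : ℤ × ℤ) :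
    genInd n z p = ∑ k : Fin n, (if (k : ℤ) = p.1 ∧ (z k : ℤ) = p.2 then (1:ℤ) else 0) := by
  rw [genInd]
  split_ifs with h
  · obtain ⟨k₀, hk1, hk2⟩ := h
    rw [Finset.sum_eq_single k₀]
    · simp [hk1, hk2]
    · intro k _ hk
      have hn : ¬((k : ℤ) = p.1 ∧ (z k : ℤ) = p.2) := by
        rintro ⟨h1, h2⟩
        refine hk (Fin.ext ?_)
        have : ((k:ℕ):ℤ) = ((k₀:ℕ):ℤ) := by rw [h1, hk1]
        exact_mod_cast this
      simp only [hn, if_false]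
    · intro hk; exact absurd (Finset.mem_univ k₀) hk
  · symm
    refine Finset.sum_eq_zero fun k _ => ?_
    have hn : ¬((k : ℤ) = p.1 ∧ (z k : ℤ) = p.2) := fun hc => h ⟨k, hc.1, hc.2⟩
    simp only [hn, if_false]

lemma cnt_delta (n : ℕ) (z : Fin n → Fin n) (p : ℤ × ℤ) :
    delta (fun q => cnt n z q.1 q.2) p = genInd n z p := by
  rw [delta, genInd_sum]
  simp only [cnt_sum]
  rw [← Finset.sum_sub_distrib, ← Finset.sum_sub_distrib, ← Finset.sum_add_distrib]
  refine Finset.sum_congr rfl fun k _ => ?_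
  have h1 : (0:ℤ) ≤ (k : ℤ) := by positivity
  have h2 : (0:ℤ) ≤ (z k : ℤ) := by positivity
  split_ifs <;> omega

lemma D_eq_cnt (n : ℕ) (x y : Fin n → Fin n) (D : ℤ × ℤ → ℤ)
    (hsupp : ∀ p : ℤ × ℤ, D p ≠ 0 → 0 ≤ p.1 ∧ p.1 < n ∧ 0 ≤ p.2 ∧ p.2 < n)
    (hdom : ∀ p : ℤ × ℤ, delta D p = genInd n x p - genInd n y p) :
    ∀ i j : ℤ, D (i, j) = cnt n x i j - cnt n y i j := by
  set G : ℤ → ℤ → ℤ := fun i j => D (i, j) - cnt n x i j + cnt n y i j with hG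
  have hvan : ∀ i j : ℤ, i < 0 ∨ j < 0 → G i j = 0 := by
    intro i j hij
    have hD : D (i, j) = 0 := by
      by_contra h
      have := hsupp (i, j) h
      simp only at this
      omega
    have hcx : ∀ z : Fin n → Fin n, cnt n z i j = 0 := by
      intro z
      have : (Finset.univ.filter (fun k : Fin n => (k : ℤ) ≤ i ∧ (z k : ℤ) ≤ j)) = ∅ := by
        refine Finset.filter_false_of_mem fun k _ => ?_
        have h1 : (0:ℤ) ≤ (k : ℤ) := by positivity
        have h2 : (0:ℤ) ≤ (z k : ℤ) := by positivity
        rintro ⟨hk1, hk2⟩; omega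
      simp [cnt, this]
    simp [hG, hD, hcx x, hcx y]
  have hrec : ∀ i j : ℤ, G i j = G (i-1) j + G i (j-1) - G (i-1) (j-1) := by
    intro i j
    have h1 := hdom (i, j)
    have h2 := cnt_delta n x (i, j)
    have h3 := cnt_delta n y (i, j)
    simp only [delta] at h1 h2 h3
    simp only [hG]
    linarith
  have key : ∀ m : ℕ, ∀ i j : ℤ, i.toNat + j.toNat = m → G i j = 0 := by
    intro m
    induction m using Nat.strong_induction_on with
    | _ m ih =>
      intro i j hm
      rcases lt_or_ge i 0 with hi | hi
      · exact hvan i j (Or.inl hi)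
      rcases lt_or_ge j 0 with hj | hj
      · exact hvan i j (Or.inr hj)
      have e1 : G (i-1) j = 0 := by
        rcases lt_or_ge (i-1) 0 with h | h
        · exact hvan _ _ (Or.inl h)
        · exact ih ((i-1).toNat + j.toNat) (by omega) _ _ rfl
      have e2 : G i (j-1) = 0 := by
        rcases lt_or_ge (j-1) 0 with h | h
        · exact hvan _ _ (Or.inr h)
        · exact ih (i.toNat + (j-1).toNat) (by omega) _ _ rfl
      have e3 : G (i-1) (j-1) = 0 := by
        rcases lt_or_ge (i-1) 0 with h | h
        · exact hvan _ _ (Or.inl h)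
        · rcases lt_or_ge (j-1) 0 with h' | h'
          · exact hvan _ _ (Or.inr h')
          · exact ih ((i-1).toNat + (j-1).toNat) (by omega) _ _ rfl
      rw [hrec i j, e1, e2, e3]; ring
  intro i j
  have := key (i.toNat + j.toNat) i j rfl
  simp only [hG] at this
  linarith

/-- Let `D` be a (nontrivial) positive domain from `x` to `y` in the planar
picture of a grid diagram (squares indexed by `{0,…,n-1}²`, square `(i,j)` having
bottom-left corner `(i,j)`), and suppose `D` has nonzero coefficient at the square
immediately to the top-right of the coordinate `(a, x a)` of `x`.  Then `D`
contains, as 2-chains, a rectangle whose bottom-left corner is `(a, x a)` and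
whose top-right corner `(b, x b)` is another coordinate of `x`. -/
theorem contains_rect_at_corner (n : ℕ) (x y : Fin n → Fin n)
    (hx : Function.Bijective x) (hy : Function.Bijective y)
    (D : ℤ × ℤ → ℤ)
    (hsupp : ∀ p : ℤ × ℤ, D p ≠ 0 → 0 ≤ p.1 ∧ p.1 < n ∧ 0 ≤ p.2 ∧ p.2 < n)
    (hdom : ∀ p : ℤ × ℤ, delta D p = genInd n x p - genInd n y p)
    (hpos : ∀ p, 0 ≤ D p)
    (a : Fin n) (ha : 0 < D ((a : ℤ), (x a : ℤ))) :
    ∃ b : Fin n, (a : ℤ) < (b : ℤ) ∧ (x a : ℤ) < (x b : ℤ) ∧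
      ∀ p : ℤ × ℤ, (a : ℤ) ≤ p.1 → p.1 < (b : ℤ) →
        (x a : ℤ) ≤ p.2 → p.2 < (x b : ℤ) → 1 ≤ D p := by
  have hform := D_eq_cnt n x y D hsupp hdom
  -- D vanishes on the lines i = n and j = n
  have htop : ∀ i : ℤ, D (i, (n : ℤ)) = 0 := by
    intro i; by_contra h
    have := hsupp _ h; simp only at this; omega
  have hright : ∀ j : ℤ, D ((n : ℤ), j) = 0 := by
    intro j; by_contra h
    have := hsupp _ h; simp only at this; omega
  -- d : first row strictly above x a where column a vanishes
  have hdex : ∃ j : ℕ, (x a : ℕ) < j ∧ D ((a : ℤ), (j : ℤ)) = 0 :=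
    ⟨n, (x a).isLt, htop _⟩
  set d := Nat.find hdex with hd_def
  obtain ⟨hd1, hd2⟩ := Nat.find_spec hdex
  have hrowa : ∀ j : ℕ, (x a : ℕ) ≤ j → j < d → 1 ≤ D ((a : ℤ), (j : ℤ)) := by
    intro j h1 h2
    rcases eq_or_lt_of_le h1 with h | h
    · have hj : (j : ℤ) = (x a : ℤ) := by omega
      rw [hj]; omega
    · have hne := Nat.find_min hdex h2
      push_neg at hne
      have := hpos ((a : ℤ), (j : ℤ))
      have := hne h
      omega
  -- c : first column strictly right of a with a zero in rows [x a, d)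
  have hcex : ∃ i : ℕ, (a : ℕ) < i ∧
      ∃ j : ℕ, (x a : ℕ) ≤ j ∧ j < d ∧ D ((i : ℤ), (j : ℤ)) = 0 :=
    ⟨n, a.isLt, (x a : ℕ), le_refl _, hd1, hright _⟩
  set c := Nat.find hcex with hc_def
  obtain ⟨hc1, J, hJ1, hJ2, hJ0⟩ := Nat.find_spec hcex
  have hrect : ∀ i j : ℕ, (a : ℕ) ≤ i → i < c → (x a : ℕ) ≤ j → j < d →
      1 ≤ D ((i : ℤ), (j : ℤ)) := by
    intro i j h1 h2 h3 h4
    rcases eq_or_lt_of_le h1 with h | h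
    · have hi : (i : ℤ) = (a : ℤ) := by omega
      rw [hi]; exact hrowa j h3 h4
    · have hne := Nat.find_min hcex h2
      push_neg at hne
      have := hpos ((i : ℤ), (j : ℤ))
      have := hne h j h3 h4
      omega
  -- counting: x-points in the box (a, c] × (J, d]
  have hbox : ∀ z : Fin n → Fin n,
      cnt n z (c : ℤ) (d : ℤ) - cnt n z (a : ℤ) (d : ℤ)
        - cnt n z (c : ℤ) (J : ℤ) + cnt n z (a : ℤ) (J : ℤ)
      = ∑ k : Fin n, (if (a : ℤ) < (k : ℤ) ∧ (k : ℤ) ≤ (c : ℤ) ∧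
          (J : ℤ) < (z k : ℤ) ∧ (z k : ℤ) ≤ (d : ℤ) then (1:ℤ) else 0) := by
    intro z
    simp only [cnt_sum]
    rw [← Finset.sum_sub_distrib, ← Finset.sum_sub_distrib, ← Finset.sum_add_distrib]
    refine Finset.sum_congr rfl fun k _ => ?_
    have h1 : (0:ℤ) ≤ (k : ℤ) := by positivity
    have h2 : (0:ℤ) ≤ (z k : ℤ) := by positivity
    have h3 : (a : ℕ) < c := hc1
    have h4 : J < d := hJ2
    split_ifs <;> omega
  have hDad : D ((a : ℤ), (d : ℤ)) = 0 := hd2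
  have hDcJ : D ((c : ℤ), (J : ℤ)) = 0 := hJ0
  have hDaJ : 1 ≤ D ((a : ℤ), (J : ℤ)) := hrowa J hJ1 hJ2
  have hDcd : 0 ≤ D ((c : ℤ), (d : ℤ)) := hpos _
  have hysum : (0:ℤ) ≤ ∑ k : Fin n, (if (a : ℤ) < (k : ℤ) ∧ (k : ℤ) ≤ (c : ℤ) ∧
      (J : ℤ) < (y k : ℤ) ∧ (y k : ℤ) ≤ (d : ℤ) then (1:ℤ) else 0) := by
    refine Finset.sum_nonneg fun k _ => ?_
    split_ifs <;> norm_num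
  have hxsum : (1:ℤ) ≤ ∑ k : Fin n, (if (a : ℤ) < (k : ℤ) ∧ (k : ℤ) ≤ (c : ℤ) ∧
      (J : ℤ) < (x k : ℤ) ∧ (x k : ℤ) ≤ (d : ℤ) then (1:ℤ) else 0) := by
    have hbx := hbox x
    have hby := hbox y
    have e1 := hform (c : ℤ) (d : ℤ)
    have e2 := hform (a : ℤ) (d : ℤ)
    have e3 := hform (c : ℤ) (J : ℤ)
    have e4 := hform (a : ℤ) (J : ℤ)
    rw [e1] at hDcd; rw [e2] at hDad; rw [e3] at hDcJ; rw [e4] at hDaJ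
    linarith
  have hbex : ∃ k : Fin n, (a : ℤ) < (k : ℤ) ∧ (k : ℤ) ≤ (c : ℤ) ∧
      (J : ℤ) < (x k : ℤ) ∧ (x k : ℤ) ≤ (d : ℤ) := by
    by_contra h
    push_neg at h
    have : ∑ k : Fin n, (if (a : ℤ) < (k : ℤ) ∧ (k : ℤ) ≤ (c : ℤ) ∧
        (J : ℤ) < (x k : ℤ) ∧ (x k : ℤ) ≤ (d : ℤ) then (1:ℤ) else 0) = 0 := by
      refine Finset.sum_eq_zero fun k _ => ?_
      have hnk : ¬((a : ℤ) < (k : ℤ) ∧ (k : ℤ) ≤ (c : ℤ) ∧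
          (J : ℤ) < (x k : ℤ) ∧ (x k : ℤ) ≤ (d : ℤ)) := by
        rintro ⟨u1, u2, u3, u4⟩
        exact absurd u4 (not_le.mpr (h k u1 u2 u3))
      simp only [hnk, if_false]
    omega
  obtain ⟨b, hb1, hb2, hb3, hb4⟩ := hbex
  refine ⟨b, hb1, by omega, ?_⟩
  rintro ⟨i, j⟩ p1 p2 p3 p4
  simp only at p1 p2 p3 p4
  have ha0 : (0:ℤ) ≤ (a : ℤ) := by positivity
  have hxa0 : (0:ℤ) ≤ (x a : ℤ) := by positivity
  have hi0 : 0 ≤ i := le_trans ha0 p1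
  have hj0 : 0 ≤ j := le_trans hxa0 p3
  have := hrect i.toNat j.toNat (by omega) (by omega) (by omega) (by omega)
  have hij : ((i.toNat : ℤ), (j.toNat : ℤ)) = ((i : ℤ), (j : ℤ)) := by
    simp [Int.toNat_of_nonneg hi0, Int.toNat_of_nonneg hj0]
  rwa [hij] at this
end

section
/- In the grid poset 𝒢 (elements x = x̃·∏U_i^{k_i}, ordered by y ⪯ x iff there is a positive domain in 𝒟(x,y)), the relation ⪯ is a partial order: it is reflexive, transitive, and antisymmetric. -/
/-- Domain condition `∂(∂D|_α) = y − x` on the torus, via mixed second differences. -/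
def IsGridDomain (n : ℕ) (x y : Equiv.Perm (ZMod n)) (D : ZMod n × ZMod n → ℤ) : Prop :=
  ∀ i j : ZMod n,
    D (i, j) - D (i - 1, j) - D (i, j - 1) + D (i - 1, j - 1)
      = (if x i = j then 1 else 0) - (if y i = j then 1 else 0)

/-- Elements of the grid poset `𝒢`: a generator `x̃` (a permutation) together with
a multidegree `k : ℤ/n → ℕ` recording the exponents of the `U_i`. -/
abbrev Gel (n : ℕ) := Equiv.Perm (ZMod n) × (ZMod n → ℕ)

/-- The grid diagram is encoded by a permutation `ρ`: the marking `O_i` occupies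
the square `(i, ρ i)` and the marking `X_i` occupies the square `(i - 1, ρ i)`
(so that `X_i, O_i` share a row and `O_i, X_{i+1}` share a column).
`D ∈ 𝒟(x, y)`: a domain from `x̃` to `ỹ` with `n_{X_i}(D) = 0` and
`n_{O_i}(D) = l_i − k_i`. -/
def InD (n : ℕ) (ρ : Equiv.Perm (ZMod n)) (x y : Gel n) (D : ZMod n × ZMod n → ℤ) : Prop :=
  IsGridDomain n x.1 y.1 D ∧ (∀ i : ZMod n, D (i, ρ (i + 1)) = 0) ∧
  (∀ i : ZMod n, D (i, ρ i) = (y.2 i : ℤ) - (x.2 i : ℤ))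

/-- `y ⪯ x` in the grid poset: there is a positive domain in `𝒟(x, y)`. -/
def preG (n : ℕ) (ρ : Equiv.Perm (ZMod n)) (y x : Gel n) : Prop :=
  ∃ D, InD n ρ x y D ∧ ∀ p, 0 ≤ D p

private lemma cyc_const {n : ℕ} [NeZero n] (f : ZMod n → ℤ)
    (h : ∀ j, f j = f (j - 1)) : ∀ j j', f j = f j' := by
  have key : ∀ (m : ℕ) (j : ZMod n), f j = f (j - (m : ZMod n)) := by
    intro m
    induction m with
    | zero => simp
    | succ m ih =>
      intro j
      calc f j = f (j - (m : ZMod n)) := ih j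
        _ = f (j - (m : ZMod n) - 1) := h _
        _ = f (j - ((m + 1 : ℕ) : ZMod n)) := by congr 1; push_cast; ring
  intro j j'
  have := key (j - j').val j
  rwa [ZMod.natCast_val, ZMod.cast_id, sub_sub_cancel] at this

private lemma split_lemma {n : ℕ} [NeZero n] (E : ZMod n × ZMod n → ℤ)
    (h : ∀ i j : ZMod n,
      E (i, j) - E (i - 1, j) - E (i, j - 1) + E (i - 1, j - 1) = 0) :
    ∀ i i' j j' : ZMod n, E (i, j) + E (i', j') = E (i, j') + E (i', j) := by
  intro i i' j j'
  have rowdiff : ∀ (a b b' : ZMod n),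
      E (a, b) - E (a - 1, b) = E (a, b') - E (a - 1, b') := by
    intro a
    exact cyc_const (fun b => E (a, b) - E (a - 1, b))
      (fun b => by have := h a b; linarith)
  have g : ∀ (a a' : ZMod n), E (a, j) - E (a, j') = E (a', j) - E (a', j') :=
    cyc_const (fun a => E (a, j) - E (a, j'))
      (fun a => by have := rowdiff a j j'; linarith)
  have := g i i'
  linarith

/-- The relation `⪯` of the grid poset `𝒢` is a partial order: reflexive,
transitive and antisymmetric. -/
theorem gridPoset_partialOrder (n : ℕ) [NeZero n] (ρ : Equiv.Perm (ZMod n)) :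
    (∀ x : Gel n, preG n ρ x x) ∧
    (∀ x y z : Gel n, preG n ρ z y → preG n ρ y x → preG n ρ z x) ∧
    (∀ x y : Gel n, preG n ρ y x → preG n ρ x y → x = y) := by
  refine ⟨?_, ?_, ?_⟩
  · -- reflexivity: the zero domain
    intro x
    exact ⟨0, ⟨fun i j => by simp, fun i => rfl, fun i => by simp⟩, fun p => le_refl 0⟩
  · -- transitivity: sum of domains
    rintro x y z ⟨D₁, ⟨h₁, hX₁, hO₁⟩, hp₁⟩ ⟨D₂, ⟨h₂, hX₂, hO₂⟩, hp₂⟩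
    refine ⟨D₁ + D₂, ⟨fun i j => ?_, fun i => ?_, fun i => ?_⟩, fun p => ?_⟩
    · have := h₁ i j; have := h₂ i j
      simp only [Pi.add_apply] at *
      linarith
    · simp [Pi.add_apply, hX₁ i, hX₂ i]
    · have := hO₁ i; have := hO₂ i
      simp only [Pi.add_apply]
      linarith
    · have := hp₁ p; have := hp₂ p
      simp only [Pi.add_apply]
      linarith
  · -- antisymmetry
    rintro x y ⟨D, ⟨hD, hDX, hDO⟩, hDp⟩ ⟨D', ⟨hD', hDX', hDO'⟩, hDp'⟩
    -- E = D + D' has vanishing mixed second differences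
    set E : ZMod n × ZMod n → ℤ := fun p => D p + D' p with hE
    have hE0 : ∀ i j : ZMod n,
        E (i, j) - E (i - 1, j) - E (i, j - 1) + E (i - 1, j - 1) = 0 := by
      intro i j
      have h1 := hD i j
      have h2 := hD' i j
      simp only [hE]
      by_cases hx : x.1 i = j <;> by_cases hy : y.1 i = j <;>
        simp [hx, hy] at h1 h2 ⊢ <;> linarith
    have hEX : ∀ i : ZMod n, E (i, ρ (i + 1)) = 0 := by
      intro i; simp [hE, hDX i, hDX' i]
    -- E vanishes everywhere
    have hEzero : ∀ p, E p = 0 := by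
      rintro ⟨i, j⟩
      have key := split_lemma E hE0 i (ρ.symm j - 1) j (ρ (i + 1))
      have z1 : E (i, ρ (i + 1)) = 0 := hEX i
      have z2 : E (ρ.symm j - 1, j) = 0 := by
        have := hEX (ρ.symm j - 1)
        simpa using this
      rw [z1, z2] at key
      have p1 : 0 ≤ E (i, j) := add_nonneg (hDp _) (hDp' _)
      have p2 : 0 ≤ E (ρ.symm j - 1, ρ (i + 1)) := add_nonneg (hDp _) (hDp' _)
      linarith
    -- hence D vanishes everywhere
    have hD0 : ∀ p, D p = 0 := by
      intro p
      have := hEzero p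
      have := hDp p; have := hDp' p
      simp only [hE] at *
      linarith
    -- permutations agree
    have h1 : x.1 = y.1 := by
      ext i
      have := hD i (x.1 i)
      simp [hD0] at this
      by_contra hne
      simp [Ne.symm hne] at this
    -- multidegrees agree
    have h2 : x.2 = y.2 := by
      funext i
      have := hDO i
      rw [hD0] at this
      have : (x.2 i : ℤ) = (y.2 i : ℤ) := by linarith
      exact_mod_cast this
    exact Prod.ext h1 h2
end

section
/- If D is a domain from generator x̃ to generator ỹ in a grid diagram, then M(x̃) − M(ỹ) = μ(D) − 2·Σ_i n_{O_i}(D) and A(x̃) − A(ỹ) = Σ_i (n_{X_i}(D) − n_{O_i}(D)), where M and A are the Maslov and Alexander gradings defined via the function J. -/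
/-- `J(a,b) = 1/2` if `(a₁−b₁)(a₂−b₂) > 0` and `0` otherwise. -/
def Jpt (a b : ℚ × ℚ) : ℚ := if 0 < (a.1 - b.1) * (a.2 - b.2) then 1/2 else 0

/-- Bilinear extension of `J` to formal sums of points, each indexed by `ℤ/n`. -/
def JJ (n : ℕ) [NeZero n] (f g : ZMod n → ℚ × ℚ) : ℚ :=
  ∑ i : ZMod n, ∑ j : ZMod n, Jpt (f i) (g j)

/-- Planar coordinates (cutting the torus open at column 0 and row 0) of the
points of a generator `x`. -/
def genPt (n : ℕ) (x : Equiv.Perm (ZMod n)) (i : ZMod n) : ℚ × ℚ :=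
  ((i.val : ℚ), (((x i).val : ℚ)))

/-- Planar coordinates of the marking `O_i`, at the center of the square `(i, ρ i)`. -/
def oPt (n : ℕ) (ρ : Equiv.Perm (ZMod n)) (i : ZMod n) : ℚ × ℚ :=
  ((i.val : ℚ) + 1/2, ((ρ i).val : ℚ) + 1/2)

/-- Planar coordinates of the marking `X_i`, at the center of the square `(i-1, ρ i)`. -/
def xPt (n : ℕ) (ρ : Equiv.Perm (ZMod n)) (i : ZMod n) : ℚ × ℚ :=
  (((i - 1 : ZMod n).val : ℚ) + 1/2, ((ρ i).val : ℚ) + 1/2)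

/-- Maslov grading `M(x̃) = J(x̃ − 𝕆, x̃ − 𝕆) + 1`, expanded bilinearly. -/
def MGr (n : ℕ) [NeZero n] (ρ x : Equiv.Perm (ZMod n)) : ℚ :=
  JJ n (genPt n x) (genPt n x) - JJ n (genPt n x) (oPt n ρ)
    - JJ n (oPt n ρ) (genPt n x) + JJ n (oPt n ρ) (oPt n ρ) + 1

/-- Alexander grading `A(x̃) = J(x̃ − (𝕏+𝕆)/2, 𝕏 − 𝕆) − (n−1)/2`, expanded bilinearly. -/
def AGr (n : ℕ) [NeZero n] (ρ x : Equiv.Perm (ZMod n)) : ℚ :=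
  JJ n (genPt n x) (xPt n ρ) - JJ n (genPt n x) (oPt n ρ)
    - (1/2) * (JJ n (xPt n ρ) (xPt n ρ) - JJ n (xPt n ρ) (oPt n ρ)
        + JJ n (oPt n ρ) (xPt n ρ) - JJ n (oPt n ρ) (oPt n ρ))
    - ((n : ℚ) - 1)/2

/-- The local multiplicity `n_p(D)` of a domain at the lattice point `p`: the
average of the coefficients of the four adjacent squares. -/
def nPt (n : ℕ) (D : ZMod n × ZMod n → ℤ) (p : ZMod n × ZMod n) : ℚ :=
  ((D p : ℚ) + D (p.1 - 1, p.2) + D (p.1, p.2 - 1) + D (p.1 - 1, p.2 - 1)) / 4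

/-- Lipshitz's formula for the Maslov index: `μ(D) = Σ_{p∈x̃} n_p(D) + Σ_{p∈ỹ} n_p(D)`. -/
def maslovIndex (n : ℕ) [NeZero n] (x y : Equiv.Perm (ZMod n))
    (D : ZMod n × ZMod n → ℤ) : ℚ :=
  (∑ i : ZMod n, nPt n D (i, x i)) + ∑ i : ZMod n, nPt n D (i, y i)


namespace GC
open Finset

variable {n : ℕ} [NeZero n]

lemma val_inj {i k : ZMod n} : i.val = k.val ↔ i = k := by
  constructor
  · intro h
    have := ZMod.natCast_rightInverse (n := n) i
    have h2 := ZMod.natCast_rightInverse (n := n) k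
    rw [← this, ← h2, h]
  · rintro rfl; rfl

lemma one_le_val {i : ZMod n} (h : i ≠ 0) : 1 ≤ i.val := by
  have := (ZMod.val_eq_zero i).not.mpr h; omega

lemma sub_one_val {i : ZMod n} (h : i ≠ 0) : (i - 1).val = i.val - 1 := by
  have h1 := one_le_val h
  have h2 : i.val - 1 < n := by have := ZMod.val_lt i; omega
  have : ((i.val - 1 : ℕ) : ZMod n) = i - 1 := by
    push_cast [Nat.cast_sub h1]
    rw [ZMod.natCast_rightInverse i]
  rw [← this, ZMod.val_cast_of_lt h2]

lemma zero_sub_one_val : ((0 : ZMod n) - 1).val = n - 1 := by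
  have h1 : (1:ℕ) ≤ n := Nat.one_le_iff_ne_zero.mpr (NeZero.ne n)
  have : ((n - 1 : ℕ) : ZMod n) = 0 - 1 := by
    push_cast [Nat.cast_sub h1]
    simp [ZMod.natCast_self]
  rw [← this, ZMod.val_cast_of_lt (by omega)]

lemma sum_val (g : ℕ → ℚ) :
    ∑ j : ZMod n, g j.val = ∑ a ∈ Finset.range n, g a := by
  apply Finset.sum_nbij' (i := fun (j : ZMod n) => j.val) (j := fun (a : ℕ) => (a : ZMod n))
  · intro a _; exact Finset.mem_range.mpr (ZMod.val_lt a)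
  · intro a _; exact Finset.mem_univ _
  · intro a _; exact ZMod.natCast_rightInverse a
  · intro a ha; exact ZMod.val_cast_of_lt (Finset.mem_range.mp ha)
  · intro a _; rfl

lemma cnt_lt {m : ℕ} (hm : m ≤ n) :
    ∑ j : ZMod n, (if j.val < m then (1:ℚ) else 0) = m := by
  rw [sum_val (fun a => if a < m then (1:ℚ) else 0)]
  rw [Finset.sum_ite, Finset.sum_const, Finset.sum_const]
  have : Finset.filter (fun a => a < m) (Finset.range n) = Finset.range m := by
    ext a; simp; omega
  simp [this]

lemma cnt_le {m : ℕ} (hm : m < n) :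
    ∑ j : ZMod n, (if j.val ≤ m then (1:ℚ) else 0) = m + 1 := by
  have h := cnt_lt (n := n) (m := m + 1) (by omega)
  push_cast at h
  rw [← h]
  apply Finset.sum_congr rfl
  intro j _
  congr 1
  simp

lemma card_zmod : (Finset.univ : Finset (ZMod n)).card = n := by
  simpa using ZMod.card n

lemma cnt_gt {m : ℕ} (hm : m < n) :
    ∑ j : ZMod n, (if m < j.val then (1:ℚ) else 0) = n - (m + 1) := by
  have h1 : ∀ j : ZMod n, (if m < j.val then (1:ℚ) else 0) = 1 - (if j.val ≤ m then (1:ℚ) else 0) := by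
    intro j; by_cases h : m < j.val
    · rw [if_pos h, if_neg (by omega)]; ring
    · rw [if_neg h, if_pos (by omega)]; ring
  rw [Finset.sum_congr rfl (fun j _ => h1 j), Finset.sum_sub_distrib, cnt_le hm,
    Finset.sum_const, card_zmod]
  push_cast; ring

lemma cnt_perm_lt (z : Equiv.Perm (ZMod n)) (m : ZMod n) :
    ∑ k : ZMod n, (if (z k).val < m.val then (1:ℚ) else 0) = m.val := by
  rw [Equiv.sum_comp z (fun j => if j.val < m.val then (1:ℚ) else 0)]
  exact cnt_lt (le_of_lt (ZMod.val_lt m))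

lemma cnt_perm_le (z : Equiv.Perm (ZMod n)) (m : ZMod n) :
    ∑ k : ZMod n, (if (z k).val ≤ m.val then (1:ℚ) else 0) = m.val + 1 := by
  rw [Equiv.sum_comp z (fun j => if j.val ≤ m.val then (1:ℚ) else 0)]
  exact cnt_le (ZMod.val_lt m)

lemma cnt_perm_eq (z : Equiv.Perm (ZMod n)) (m : ZMod n) :
    ∑ k : ZMod n, (if z k = m then (1:ℚ) else 0) = 1 := by
  rw [Equiv.sum_comp z (fun j => if j = m then (1:ℚ) else 0)]
  simp

lemma cnt_gt' (m : ZMod n) :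
    ∑ k : ZMod n, (if m.val < k.val then (1:ℚ) else 0) = n - (m.val + 1) :=
  cnt_gt (ZMod.val_lt m)

lemma gauss : ∑ i : ZMod n, ((i.val : ℚ)) = (n * (n-1))/2 := by
  rw [sum_val (fun a => (a:ℚ))]
  have h := Finset.sum_range_id_mul_two n
  have h2 : ((∑ i ∈ Finset.range n, i : ℕ) : ℚ) * 2 = (n:ℚ) * ((n:ℚ) - 1) := by
    rw [← Nat.cast_ofNat, ← Nat.cast_mul, h]
    have h1 : (1:ℕ) ≤ n := Nat.one_le_iff_ne_zero.mpr (NeZero.ne n)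
    push_cast [Nat.cast_sub h1]
    ring
  push_cast at h2 ⊢
  linarith

lemma gauss_perm (z : Equiv.Perm (ZMod n)) : ∑ i : ZMod n, (((z i).val : ℚ)) = (n * (n-1))/2 := by
  rw [Equiv.sum_comp z (fun j => (j.val : ℚ))]; exact gauss


lemma natq_lt {a b : ℕ} : (a:ℚ) < b ↔ a < b := by exact_mod_cast Iff.rfl
lemma natq_le {a b : ℕ} : (a:ℚ) ≤ b ↔ a ≤ b := by exact_mod_cast Iff.rfl

lemma half_pos_iff {a b : ℕ} : (0 < (a:ℚ) - ((b:ℚ) + 1/2)) ↔ b < a := by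
  constructor
  · intro h
    have : (b:ℚ) < a := by linarith
    exact_mod_cast this
  · intro h
    have : (b:ℚ) + 1 ≤ a := by exact_mod_cast h
    linarith

lemma half_neg_iff {a b : ℕ} : ((a:ℚ) - ((b:ℚ) + 1/2) < 0) ↔ a ≤ b := by
  constructor
  · intro h
    have h2 : (a:ℚ) < b + 1 := by linarith
    have h3 : a < b + 1 := by exact_mod_cast h2
    omega
  · intro h
    have : (a:ℚ) ≤ b := by exact_mod_cast h
    linarith

lemma jpt_gc (a b c d : ℕ) :
    Jpt ((a:ℚ), (c:ℚ)) ((b:ℚ) + 1/2, (d:ℚ) + 1/2)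
      = (1/2) * ((if b < a ∧ d < c then (1:ℚ) else 0) + (if a ≤ b ∧ c ≤ d then (1:ℚ) else 0)) := by
  unfold Jpt
  simp only
  rcases Nat.lt_or_ge b a with h1 | h1 <;> rcases Nat.lt_or_ge d c with h2 | h2
  · rw [if_pos (mul_pos (half_pos_iff.mpr h1) (half_pos_iff.mpr h2)),
      if_pos ⟨h1, h2⟩, if_neg (by omega)]
    ring
  · rw [if_neg (not_lt.mpr (le_of_lt (mul_neg_of_pos_of_neg (half_pos_iff.mpr h1) (half_neg_iff.mpr h2)))),
      if_neg (by omega), if_neg (by omega)]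
    ring
  · rw [if_neg (not_lt.mpr (le_of_lt (mul_neg_of_neg_of_pos (half_neg_iff.mpr h1) (half_pos_iff.mpr h2)))),
      if_neg (by omega), if_neg (by omega)]
    ring
  · rw [if_pos (mul_pos_of_neg_of_neg (half_neg_iff.mpr h1) (half_neg_iff.mpr h2)),
      if_neg (by omega), if_pos ⟨h1, h2⟩]
    ring

lemma jpt_gg (a b c d : ℕ) :
    Jpt ((a:ℚ), (c:ℚ)) ((b:ℚ), (d:ℚ))
      = (1/2) * ((if b < a ∧ d < c then (1:ℚ) else 0) + (if a < b ∧ c < d then (1:ℚ) else 0)) := by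
  unfold Jpt
  simp only
  rcases Nat.lt_trichotomy a b with h1 | h1 | h1 <;> rcases Nat.lt_trichotomy c d with h2 | h2 | h2
  · rw [if_pos (mul_pos_of_neg_of_neg (by rw [sub_neg]; exact_mod_cast h1) (by rw [sub_neg]; exact_mod_cast h2)),
      if_neg (by omega), if_pos ⟨h1, h2⟩]; ring
  · rw [if_neg (by rw [show (c:ℚ) = d by exact_mod_cast h2]; simp), if_neg (by omega), if_neg (by omega)]; ring
  · rw [if_neg (not_lt.mpr (le_of_lt (mul_neg_of_neg_of_pos (by rw [sub_neg]; exact_mod_cast h1) (by rw [sub_pos]; exact_mod_cast h2)))),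
      if_neg (by omega), if_neg (by omega)]; ring
  · rw [if_neg (by rw [show (a:ℚ) = b by exact_mod_cast h1]; simp), if_neg (by omega), if_neg (by omega)]; ring
  · rw [if_neg (by rw [show (a:ℚ) = b by exact_mod_cast h1]; simp), if_neg (by omega), if_neg (by omega)]; ring
  · rw [if_neg (by rw [show (a:ℚ) = b by exact_mod_cast h1]; simp), if_neg (by omega), if_neg (by omega)]; ring
  · rw [if_neg (not_lt.mpr (le_of_lt (mul_neg_of_pos_of_neg (by rw [sub_pos]; exact_mod_cast h1) (by rw [sub_neg]; exact_mod_cast h2)))),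
      if_neg (by omega), if_neg (by omega)]; ring
  · rw [if_neg (by rw [show (c:ℚ) = d by exact_mod_cast h2]; simp), if_neg (by omega), if_neg (by omega)]; ring
  · rw [if_pos (mul_pos (by rw [sub_pos]; exact_mod_cast h1) (by rw [sub_pos]; exact_mod_cast h2)),
      if_pos ⟨h1, h2⟩, if_neg (by omega)]; ring

lemma jpt_comm (a b : ℚ × ℚ) : Jpt a b = Jpt b a := by
  unfold Jpt
  rw [show (b.1 - a.1) * (b.2 - a.2) = (a.1 - b.1) * (a.2 - b.2) by ring]

variable {n : ℕ} [NeZero n]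

-- sum combinators
lemma sum2_congr {F G : ZMod n → ZMod n → ℚ} (h : ∀ i k, F i k = G i k) :
    ∑ i : ZMod n, ∑ k : ZMod n, F i k = ∑ i : ZMod n, ∑ k : ZMod n, G i k :=
  Finset.sum_congr rfl fun i _ => Finset.sum_congr rfl fun k _ => h i k

lemma sum2_add (F G : ZMod n → ZMod n → ℚ) :
    ∑ i : ZMod n, ∑ k : ZMod n, (F i k + G i k)
      = (∑ i : ZMod n, ∑ k : ZMod n, F i k) + ∑ i : ZMod n, ∑ k : ZMod n, G i k := by
  rw [← Finset.sum_add_distrib]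
  exact Finset.sum_congr rfl fun i _ => by rw [← Finset.sum_add_distrib]

lemma sum2_sub (F G : ZMod n → ZMod n → ℚ) :
    ∑ i : ZMod n, ∑ k : ZMod n, (F i k - G i k)
      = (∑ i : ZMod n, ∑ k : ZMod n, F i k) - ∑ i : ZMod n, ∑ k : ZMod n, G i k := by
  rw [← Finset.sum_sub_distrib]
  exact Finset.sum_congr rfl fun i _ => by rw [← Finset.sum_sub_distrib]

lemma sum2_half (F G : ZMod n → ZMod n → ℚ) :
    ∑ i : ZMod n, ∑ k : ZMod n, ((1/2) * (F i k + G i k))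
      = (1/2) * (∑ i : ZMod n, ∑ k : ZMod n, F i k)
        + (1/2) * ∑ i : ZMod n, ∑ k : ZMod n, G i k := by
  rw [sum2_congr (G := fun i k => (1/2) * F i k + (1/2) * G i k) (fun i k => by ring),
    sum2_add, Finset.mul_sum, Finset.mul_sum]
  congr 1 <;> exact Finset.sum_congr rfl fun i _ => (Finset.mul_sum _ _ _).symm

lemma sum2_swap (F : ZMod n → ZMod n → ℚ) :
    ∑ i : ZMod n, ∑ k : ZMod n, F i k = ∑ i : ZMod n, ∑ k : ZMod n, F k i :=
  Finset.sum_comm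

variable {n : ℕ} [NeZero n]

-- quantities
def Sf (z σ : Equiv.Perm (ZMod n)) : ℚ :=
  ∑ i : ZMod n, ∑ k : ZMod n, if k.val < i.val ∧ (z k).val < (σ i).val then 1 else 0
def Gf (z σ : Equiv.Perm (ZMod n)) : ℚ :=
  ∑ i : ZMod n, ∑ k : ZMod n, if k.val < i.val ∧ z k = σ i then 1 else 0
def Gf' (z σ : Equiv.Perm (ZMod n)) : ℚ :=
  ∑ i : ZMod n, ∑ k : ZMod n, if i.val < k.val ∧ z k = σ i then 1 else 0
def Elt (z σ : Equiv.Perm (ZMod n)) : ℚ :=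
  ∑ i : ZMod n, if (z i).val < (σ i).val then 1 else 0
def Eeq (z σ : Equiv.Perm (ZMod n)) : ℚ :=
  ∑ i : ZMod n, if z i = σ i then 1 else 0
def Ele (σ ρ : Equiv.Perm (ZMod n)) : ℚ :=
  ∑ i : ZMod n, if (σ i).val ≤ (ρ i).val then 1 else 0
def UO (ρ σ : Equiv.Perm (ZMod n)) : ℚ :=
  ∑ i : ZMod n, ∑ k : ZMod n, if i.val ≤ k.val ∧ (σ i).val ≤ (ρ k).val then 1 else 0
def UX (ρ σ : Equiv.Perm (ZMod n)) : ℚ :=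
  ∑ i : ZMod n, ∑ k : ZMod n, if i.val ≤ (k-1).val ∧ (σ i).val ≤ (ρ k).val then 1 else 0
def TX (ρ σ : Equiv.Perm (ZMod n)) : ℚ :=
  ∑ i : ZMod n, ∑ k : ZMod n, if (k-1).val < i.val ∧ (ρ k).val < (σ i).val then 1 else 0
def Wf (z σ : Equiv.Perm (ZMod n)) : ℚ :=
  ∑ i : ZMod n, ∑ k : ZMod n,
    ((if k.val ≤ i.val ∧ (z k).val ≤ (σ i).val then (1:ℚ) else 0)
      + (if k.val < i.val ∧ (z k).val ≤ (σ i).val then 1 else 0)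
      + (if k.val ≤ i.val ∧ (z k).val < (σ i).val then 1 else 0)
      + (if k.val < i.val ∧ (z k).val < (σ i).val then 1 else 0))

-- JJ evaluations
variable {ρ σ z x y : Equiv.Perm (ZMod n)}

lemma JJ_comm (f g : ZMod n → ℚ × ℚ) : JJ n f g = JJ n g f := by
  unfold JJ
  calc ∑ i : ZMod n, ∑ j : ZMod n, Jpt (f i) (g j)
      = ∑ j : ZMod n, ∑ i : ZMod n, Jpt (f i) (g j) := Finset.sum_comm
    _ = ∑ j : ZMod n, ∑ i : ZMod n, Jpt (g j) (f i) := sum2_congr fun j i => jpt_comm _ _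

lemma Jgg_eval (σ : Equiv.Perm (ZMod n)) : JJ n (genPt n σ) (genPt n σ) = Sf σ σ := by
  calc JJ n (genPt n σ) (genPt n σ)
      = ∑ i : ZMod n, ∑ k : ZMod n, ((1/2) *
          ((if k.val < i.val ∧ (σ k).val < (σ i).val then (1:ℚ) else 0)
            + (if i.val < k.val ∧ (σ i).val < (σ k).val then (1:ℚ) else 0))) :=
        sum2_congr fun i k => jpt_gg i.val k.val (σ i).val (σ k).val
    _ = (1/2) * (∑ i : ZMod n, ∑ k : ZMod n, (if k.val < i.val ∧ (σ k).val < (σ i).val then (1:ℚ) else 0))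
        + (1/2) * ∑ i : ZMod n, ∑ k : ZMod n, (if i.val < k.val ∧ (σ i).val < (σ k).val then (1:ℚ) else 0) :=
        sum2_half _ _
    _ = (1/2) * Sf σ σ + (1/2) * Sf σ σ := by
        rw [show (∑ i : ZMod n, ∑ k : ZMod n, (if i.val < k.val ∧ (σ i).val < (σ k).val then (1:ℚ) else 0)) = Sf σ σ from sum2_swap _]
        rw [Sf]
    _ = Sf σ σ := by ring

lemma JgO_eval (ρ σ : Equiv.Perm (ZMod n)) :
    JJ n (genPt n σ) (oPt n ρ) = (1/2) * Sf ρ σ + (1/2) * UO ρ σ :=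
  calc JJ n (genPt n σ) (oPt n ρ)
      = ∑ i : ZMod n, ∑ k : ZMod n, ((1/2) *
          ((if k.val < i.val ∧ (ρ k).val < (σ i).val then (1:ℚ) else 0)
            + (if i.val ≤ k.val ∧ (σ i).val ≤ (ρ k).val then (1:ℚ) else 0))) :=
        sum2_congr fun i k => jpt_gc i.val k.val (σ i).val (ρ k).val
    _ = (1/2) * Sf ρ σ + (1/2) * UO ρ σ := sum2_half _ _

lemma JgX_eval (ρ σ : Equiv.Perm (ZMod n)) :
    JJ n (genPt n σ) (xPt n ρ) = (1/2) * TX ρ σ + (1/2) * UX ρ σ :=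
  calc JJ n (genPt n σ) (xPt n ρ)
      = ∑ i : ZMod n, ∑ k : ZMod n, ((1/2) *
          ((if (k - 1 : ZMod n).val < i.val ∧ (ρ k).val < (σ i).val then (1:ℚ) else 0)
            + (if i.val ≤ (k - 1 : ZMod n).val ∧ (σ i).val ≤ (ρ k).val then (1:ℚ) else 0))) :=
        sum2_congr fun i k => jpt_gc i.val (k - 1 : ZMod n).val (σ i).val (ρ k).val
    _ = (1/2) * TX ρ σ + (1/2) * UX ρ σ := sum2_half _ _

-- counting identities
lemma cnt_le' (i : ZMod n) : ∑ k : ZMod n, (if i.val ≤ k.val then (1:ℚ) else 0) = n - i.val := by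
  have h1 : ∀ k : ZMod n, (if i.val ≤ k.val then (1:ℚ) else 0)
      = 1 - (if k.val < i.val then (1:ℚ) else 0) := by
    intro k; split_ifs with h h2 h2 <;> first | (exfalso; omega) | norm_num
  rw [Finset.sum_congr rfl (fun k _ => h1 k), Finset.sum_sub_distrib,
    cnt_lt (le_of_lt (ZMod.val_lt i)), Finset.sum_const, card_zmod]
  push_cast; ring

lemma cnt_shift_le (i : ZMod n) :
    ∑ k : ZMod n, (if i.val ≤ (k - 1 : ZMod n).val then (1:ℚ) else 0) = n - i.val := by
  have := Equiv.sum_comp (Equiv.subRight (1 : ZMod n))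
    (fun j => if i.val ≤ j.val then (1:ℚ) else 0)
  simp only [Equiv.subRight_apply] at this
  rw [this]; exact cnt_le' i

lemma sum_n_sub_val : ∑ i : ZMod n, ((n:ℚ) - (i.val:ℚ)) = (n:ℚ) * n - (n * (n-1))/2 := by
  rw [Finset.sum_sub_distrib, Finset.sum_const, card_zmod, gauss]; push_cast; ring

lemma UO_sub_Sf (ρ σ : Equiv.Perm (ZMod n)) : UO ρ σ - Sf ρ σ = n := by
  have point : ∀ i k : ZMod n,
      ((if i.val ≤ k.val ∧ (σ i).val ≤ (ρ k).val then (1:ℚ) else 0)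
        - (if k.val < i.val ∧ (ρ k).val < (σ i).val then (1:ℚ) else 0))
      = (if i.val ≤ k.val then (1:ℚ) else 0) - (if (ρ k).val < (σ i).val then (1:ℚ) else 0) := by
    intro i k; split_ifs <;> first | (exfalso; omega) | norm_num
  have h := sum2_congr point
  rw [sum2_sub, sum2_sub] at h
  have h2 : ∀ i : ZMod n, ∑ k : ZMod n, (if (ρ k).val < (σ i).val then (1:ℚ) else 0) = (σ i).val :=
    fun i => cnt_perm_lt ρ (σ i)
  rw [show UO ρ σ - Sf ρ σ = _ from h]
  rw [Finset.sum_congr rfl (fun i (_ : i ∈ Finset.univ) => cnt_le' i),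
    Finset.sum_congr rfl (fun i (_ : i ∈ Finset.univ) => h2 i)]
  rw [sum_n_sub_val, gauss_perm]
  have h1 : (1:ℕ) ≤ n := Nat.one_le_iff_ne_zero.mpr (NeZero.ne n)
  have : (1:ℚ) ≤ (n:ℚ) := by exact_mod_cast h1
  ring

lemma UX_sub_TX (ρ σ : Equiv.Perm (ZMod n)) : UX ρ σ - TX ρ σ = n := by
  have point : ∀ i k : ZMod n,
      ((if i.val ≤ (k - 1 : ZMod n).val ∧ (σ i).val ≤ (ρ k).val then (1:ℚ) else 0)
        - (if (k - 1 : ZMod n).val < i.val ∧ (ρ k).val < (σ i).val then (1:ℚ) else 0))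
      = (if i.val ≤ (k - 1 : ZMod n).val then (1:ℚ) else 0)
        - (if (ρ k).val < (σ i).val then (1:ℚ) else 0) := by
    intro i k; split_ifs <;> first | (exfalso; omega) | norm_num
  have h := sum2_congr point
  rw [sum2_sub, sum2_sub] at h
  have h2 : ∀ i : ZMod n, ∑ k : ZMod n, (if (ρ k).val < (σ i).val then (1:ℚ) else 0) = (σ i).val :=
    fun i => cnt_perm_lt ρ (σ i)
  rw [show UX ρ σ - TX ρ σ = _ from h]
  rw [Finset.sum_congr rfl (fun i (_ : i ∈ Finset.univ) => cnt_shift_le i),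
    Finset.sum_congr rfl (fun i (_ : i ∈ Finset.univ) => h2 i)]
  rw [sum_n_sub_val, gauss_perm]
  have h1 : (1:ℕ) ≤ n := Nat.one_le_iff_ne_zero.mpr (NeZero.ne n)
  have : (1:ℚ) ≤ (n:ℚ) := by exact_mod_cast h1
  ring

lemma UX_sub_UO (ρ σ : Equiv.Perm (ZMod n)) :
    UX ρ σ - UO ρ σ = ((ρ 0).val + 1 : ℚ) - Ele σ ρ := by
  unfold UX UO
  rw [Finset.sum_comm (γ := ZMod n)
    (f := fun i k => if i.val ≤ (k-1:ZMod n).val ∧ (σ i).val ≤ (ρ k).val then (1:ℚ) else 0)]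
  rw [Finset.sum_comm (γ := ZMod n)
    (f := fun i k => if i.val ≤ k.val ∧ (σ i).val ≤ (ρ k).val then (1:ℚ) else 0)]
  rw [← Finset.sum_sub_distrib]
  have inner : ∀ k : ZMod n,
      ((∑ i : ZMod n, if i.val ≤ (k-1:ZMod n).val ∧ (σ i).val ≤ (ρ k).val then (1:ℚ) else 0)
        - ∑ i : ZMod n, if i.val ≤ k.val ∧ (σ i).val ≤ (ρ k).val then (1:ℚ) else 0)
      = (if k = 0 then ((ρ 0).val + 1 : ℚ) else 0)
        - (if (σ k).val ≤ (ρ k).val then (1:ℚ) else 0) := by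
    intro k
    by_cases hk : k = 0
    · subst hk
      have e1 : ∀ i : ZMod n,
          (if i.val ≤ ((0:ZMod n)-1).val ∧ (σ i).val ≤ (ρ 0).val then (1:ℚ) else 0)
            = (if (σ i).val ≤ (ρ 0).val then (1:ℚ) else 0) := by
        intro i
        have hi : i.val ≤ ((0:ZMod n)-1).val := by
          rw [zero_sub_one_val]; have := ZMod.val_lt i; omega
        rw [if_congr (and_iff_right hi) rfl rfl]
      have e2 : ∀ i : ZMod n,
          (if i.val ≤ (0:ZMod n).val ∧ (σ i).val ≤ (ρ 0).val then (1:ℚ) else 0)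
            = (if i = 0 then (if (σ 0).val ≤ (ρ 0).val then (1:ℚ) else 0) else 0) := by
        intro i
        by_cases hi : i = 0
        · subst hi; simp
        · rw [if_neg hi, if_neg]
          rintro ⟨h1, _⟩
          exact hi ((ZMod.val_eq_zero i).mp (by simpa using h1))
      rw [Finset.sum_congr rfl (fun i _ => e1 i), Finset.sum_congr rfl (fun i _ => e2 i),
        cnt_perm_le σ (ρ 0), Finset.sum_ite_eq' Finset.univ (0 : ZMod n)
          (fun _ => if (σ 0).val ≤ (ρ 0).val then (1:ℚ) else 0)]
      simp
    · have hv := sub_one_val hk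
      have h1 := one_le_val hk
      rw [← Finset.sum_sub_distrib]
      have e3 : ∀ i : ZMod n,
          ((if i.val ≤ (k-1:ZMod n).val ∧ (σ i).val ≤ (ρ k).val then (1:ℚ) else 0)
            - if i.val ≤ k.val ∧ (σ i).val ≤ (ρ k).val then (1:ℚ) else 0)
          = -(if i = k then (if (σ k).val ≤ (ρ k).val then (1:ℚ) else 0) else 0) := by
        intro i
        by_cases hi : i = k
        · subst hi; rw [hv, if_pos rfl]
          split_ifs <;> first | (exfalso; omega) | norm_num
        · rw [if_neg hi, hv]
          have hvv : i.val ≠ k.val := fun hh => hi (val_inj.mp hh)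
          split_ifs <;> first | (exfalso; omega) | norm_num
      rw [Finset.sum_congr rfl (fun i _ => e3 i), Finset.sum_neg_distrib,
        Finset.sum_ite_eq' Finset.univ k
          (fun _ => if (σ k).val ≤ (ρ k).val then (1:ℚ) else 0)]
      rw [if_neg hk]
      simp
  rw [Finset.sum_congr rfl (fun k _ => inner k), Finset.sum_sub_distrib,
    Finset.sum_ite_eq' Finset.univ (0 : ZMod n) (fun _ => ((ρ 0).val + 1 : ℚ))]
  unfold Ele
  simp

-- permutation pair identities
lemma I3 (z σ : Equiv.Perm (ZMod n)) : Gf' z σ = Gf σ z := by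
  unfold Gf' Gf
  rw [sum2_swap (F := fun i k => if i.val < k.val ∧ z k = σ i then (1:ℚ) else 0)]
  exact sum2_congr fun i k => by rw [if_congr (and_congr Iff.rfl eq_comm) rfl rfl]

lemma Eeq_comm (z σ : Equiv.Perm (ZMod n)) : Eeq z σ = Eeq σ z := by
  unfold Eeq
  exact Finset.sum_congr rfl fun i _ => by rw [if_congr eq_comm rfl rfl]

lemma I1 (z σ : Equiv.Perm (ZMod n)) : Sf z σ - Sf σ z - Gf' z σ = - Elt z σ := by
  have hswap : Sf σ z = ∑ i : ZMod n, ∑ k : ZMod n,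
      (if i.val < k.val ∧ (σ i).val < (z k).val then (1:ℚ) else 0) := by
    unfold Sf
    exact sum2_swap (F := fun i k => if k.val < i.val ∧ (σ k).val < (z i).val then (1:ℚ) else 0)
  rw [hswap]
  unfold Sf Gf' Elt
  rw [← sum2_sub, ← sum2_sub]
  have point : ∀ i k : ZMod n,
      ((if k.val < i.val ∧ (z k).val < (σ i).val then (1:ℚ) else 0)
        - (if i.val < k.val ∧ (σ i).val < (z k).val then (1:ℚ) else 0)
        - (if i.val < k.val ∧ z k = σ i then (1:ℚ) else 0))
      = (if (z k).val < (σ i).val then (1:ℚ) else 0)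
        - (if k = i then (if (z i).val < (σ i).val then (1:ℚ) else 0) else 0)
        - (if i.val < k.val then (1:ℚ) else 0) := by
    intro i k
    by_cases hk : k = i
    · subst hk
      simp only [← val_inj]
      split_ifs <;> first | (exfalso; omega) | norm_num
    · have hvv : k.val ≠ i.val := fun hh => hk (val_inj.mp hh)
      simp only [← val_inj]
      split_ifs <;> first | (exfalso; omega) | norm_num
  rw [sum2_congr point]
  have inner : ∀ i : ZMod n,
      (∑ k : ZMod n, ((if (z k).val < (σ i).val then (1:ℚ) else 0)
        - (if k = i then (if (z i).val < (σ i).val then (1:ℚ) else 0) else 0)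
        - (if i.val < k.val then (1:ℚ) else 0)))
      = ((σ i).val : ℚ) - (if (z i).val < (σ i).val then (1:ℚ) else 0) - ((n:ℚ) - (i.val + 1)) := by
    intro i
    rw [Finset.sum_sub_distrib, Finset.sum_sub_distrib, cnt_perm_lt z (σ i),
      Finset.sum_ite_eq' Finset.univ i (fun _ => if (z i).val < (σ i).val then (1:ℚ) else 0),
      cnt_gt' i]
    simp
  rw [Finset.sum_congr rfl (fun i _ => inner i)]
  rw [Finset.sum_sub_distrib, Finset.sum_sub_distrib, gauss_perm σ]
  have e : ∑ i : ZMod n, ((n:ℚ) - ((i.val:ℚ) + 1)) = (n:ℚ)*n - (n*(n-1))/2 - n := by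
    have : ∀ i : ZMod n, ((n:ℚ) - ((i.val:ℚ) + 1)) = ((n:ℚ) - (i.val:ℚ)) - 1 := fun i => by ring
    rw [Finset.sum_congr rfl (fun i _ => this i), Finset.sum_sub_distrib, sum_n_sub_val,
      Finset.sum_const, card_zmod]
    push_cast; ring
  rw [e]
  ring

lemma I2 (z σ : Equiv.Perm (ZMod n)) : Gf z σ + Gf' z σ + Eeq z σ = n := by
  unfold Gf Gf' Eeq
  rw [← sum2_add]
  have point : ∀ i k : ZMod n,
      ((if k.val < i.val ∧ z k = σ i then (1:ℚ) else 0)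
        + (if i.val < k.val ∧ z k = σ i then (1:ℚ) else 0))
      = (if z k = σ i then (1:ℚ) else 0)
        - (if k = i then (if z i = σ i then (1:ℚ) else 0) else 0) := by
    intro i k
    by_cases hk : k = i
    · subst hk
      simp only [← val_inj]
      split_ifs <;> first | (exfalso; omega) | norm_num
    · have hvv : k.val ≠ i.val := fun hh => hk (val_inj.mp hh)
      simp only [← val_inj]
      split_ifs <;> first | (exfalso; omega) | norm_num
  rw [sum2_congr point]
  have inner : ∀ i : ZMod n,
      (∑ k : ZMod n, ((if z k = σ i then (1:ℚ) else 0)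
        - (if k = i then (if z i = σ i then (1:ℚ) else 0) else 0)))
      = 1 - (if z i = σ i then (1:ℚ) else 0) := by
    intro i
    rw [Finset.sum_sub_distrib, cnt_perm_eq z (σ i),
      Finset.sum_ite_eq' Finset.univ i (fun _ => if z i = σ i then (1:ℚ) else 0)]
    simp
  rw [Finset.sum_congr rfl (fun i _ => inner i), Finset.sum_sub_distrib,
    Finset.sum_const, card_zmod]
  simp

lemma I4 (z σ : Equiv.Perm (ZMod n)) : Elt z σ + Elt σ z + Eeq z σ = n := by
  unfold Elt Eeq
  rw [← Finset.sum_add_distrib, ← Finset.sum_add_distrib]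
  have point : ∀ i : ZMod n,
      ((if (z i).val < (σ i).val then (1:ℚ) else 0)
        + (if (σ i).val < (z i).val then (1:ℚ) else 0)
        + (if z i = σ i then (1:ℚ) else 0)) = 1 := by
    intro i
    simp only [← val_inj]
    split_ifs <;> first | (exfalso; omega) | norm_num
  rw [Finset.sum_congr rfl (fun i _ => point i), Finset.sum_const, card_zmod]
  simp

lemma Gf_self (σ : Equiv.Perm (ZMod n)) : Gf σ σ = 0 := by
  unfold Gf
  rw [sum2_congr (G := fun _ _ => (0:ℚ))]
  · simp
  · intro i k
    rw [if_neg]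
    rintro ⟨h1, h2⟩
    exact absurd (congrArg ZMod.val (σ.injective h2)) (by omega)

lemma Elt_self (σ : Equiv.Perm (ZMod n)) : Elt σ σ = 0 := by
  unfold Elt; simp

lemma Eeq_self (σ : Equiv.Perm (ZMod n)) : Eeq σ σ = n := by
  unfold Eeq
  rw [Finset.sum_congr rfl (fun i (_ : i ∈ Finset.univ) => if_pos rfl), Finset.sum_const, card_zmod]
  simp

lemma W_eval (z σ : Equiv.Perm (ZMod n)) :
    Wf z σ = 4 * Sf z σ + 2 * Gf z σ + 2 * Elt z σ + Eeq z σ := by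
  unfold Wf Sf Gf Elt Eeq
  have point : ∀ i k : ZMod n,
      ((if k.val ≤ i.val ∧ (z k).val ≤ (σ i).val then (1:ℚ) else 0)
        + (if k.val < i.val ∧ (z k).val ≤ (σ i).val then 1 else 0)
        + (if k.val ≤ i.val ∧ (z k).val < (σ i).val then 1 else 0)
        + (if k.val < i.val ∧ (z k).val < (σ i).val then 1 else 0))
      = 4 * (if k.val < i.val ∧ (z k).val < (σ i).val then (1:ℚ) else 0)
        + 2 * (if k.val < i.val ∧ z k = σ i then (1:ℚ) else 0)
        + (if k = i then ((2 * if (z i).val < (σ i).val then (1:ℚ) else 0)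
            + (if z i = σ i then (1:ℚ) else 0)) else 0) := by
    intro i k
    by_cases hk : k = i
    · subst hk
      simp only [← val_inj]
      split_ifs <;> first | (exfalso; omega) | norm_num
    · have hvv : k.val ≠ i.val := fun hh => hk (val_inj.mp hh)
      simp only [← val_inj]
      split_ifs <;> first | (exfalso; omega) | norm_num
  rw [sum2_congr point]
  have inner : ∀ i : ZMod n,
      (∑ k : ZMod n, (4 * (if k.val < i.val ∧ (z k).val < (σ i).val then (1:ℚ) else 0)
        + 2 * (if k.val < i.val ∧ z k = σ i then (1:ℚ) else 0)
        + (if k = i then ((2 * if (z i).val < (σ i).val then (1:ℚ) else 0)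
            + (if z i = σ i then (1:ℚ) else 0)) else 0)))
      = 4 * (∑ k : ZMod n, (if k.val < i.val ∧ (z k).val < (σ i).val then (1:ℚ) else 0))
        + 2 * (∑ k : ZMod n, (if k.val < i.val ∧ z k = σ i then (1:ℚ) else 0))
        + ((2 * if (z i).val < (σ i).val then (1:ℚ) else 0)
            + (if z i = σ i then (1:ℚ) else 0)) := by
    intro i
    rw [Finset.sum_add_distrib, Finset.sum_add_distrib,
      Finset.sum_ite_eq' Finset.univ i
        (fun _ => ((2 * if (z i).val < (σ i).val then (1:ℚ) else 0)
            + (if z i = σ i then (1:ℚ) else 0))),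
      ← Finset.mul_sum, ← Finset.mul_sum]
    simp
  rw [Finset.sum_congr rfl (fun i _ => inner i), Finset.sum_add_distrib,
    Finset.sum_add_distrib, Finset.sum_add_distrib, ← Finset.mul_sum, ← Finset.mul_sum,
    ← Finset.mul_sum]
  ring

-- explicit particular domain
def D0 (x y : Equiv.Perm (ZMod n)) (p : ZMod n × ZMod n) : ℤ :=
  ∑ k : ZMod n, ((if k.val ≤ p.1.val ∧ (x k).val ≤ p.2.val then (1:ℤ) else 0)
    - (if k.val ≤ p.1.val ∧ (y k).val ≤ p.2.val then (1:ℤ) else 0))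

lemma D0_left (x y : Equiv.Perm (ZMod n)) (i j : ZMod n) :
    D0 x y (i - 1, j) = ∑ k : ZMod n,
      ((if k.val < i.val ∧ (x k).val ≤ j.val then (1:ℤ) else 0)
        - (if k.val < i.val ∧ (y k).val ≤ j.val then (1:ℤ) else 0)) := by
  unfold D0
  by_cases h : i = 0
  · subst h
    have htop : ∀ k : ZMod n, k.val ≤ ((0:ZMod n) - 1).val := by
      intro k; rw [zero_sub_one_val]; have := ZMod.val_lt k; omega
    have e1 : ∀ k : ZMod n,
        ((if k.val ≤ ((0:ZMod n) - 1, j).1.val ∧ (x k).val ≤ ((0:ZMod n) - 1, j).2.val then (1:ℤ) else 0)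
          - (if k.val ≤ ((0:ZMod n) - 1, j).1.val ∧ (y k).val ≤ ((0:ZMod n) - 1, j).2.val then (1:ℤ) else 0))
        = ((if (x k).val ≤ j.val then (1:ℤ) else 0) - (if (y k).val ≤ j.val then (1:ℤ) else 0)) := by
      intro k
      rw [if_congr (and_iff_right (htop k)) rfl rfl, if_congr (and_iff_right (htop k)) rfl rfl]
    rw [Finset.sum_congr rfl (fun k _ => e1 k)]
    rw [Finset.sum_sub_distrib, Finset.sum_sub_distrib,
      Equiv.sum_comp x (fun m => if m.val ≤ j.val then (1:ℤ) else 0),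
      Equiv.sum_comp y (fun m => if m.val ≤ j.val then (1:ℤ) else 0)]
    have e2 : ∀ k : ZMod n, (if k.val < (0:ZMod n).val ∧ (x k).val ≤ j.val then (1:ℤ) else 0) = 0 := by
      intro k; rw [if_neg]; rintro ⟨h1, _⟩; simp [ZMod.val_zero] at h1
    have e3 : ∀ k : ZMod n, (if k.val < (0:ZMod n).val ∧ (y k).val ≤ j.val then (1:ℤ) else 0) = 0 := by
      intro k; rw [if_neg]; rintro ⟨h1, _⟩; simp [ZMod.val_zero] at h1
    rw [sub_self, Finset.sum_congr rfl (fun k _ => e2 k), Finset.sum_congr rfl (fun k _ => e3 k),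
      Finset.sum_const]
    simp
  · have hv := sub_one_val h
    have h1 := one_le_val h
    apply Finset.sum_congr rfl
    intro k _
    have e : (k.val ≤ (i - 1, j).1.val) ↔ (k.val < i.val) := by
      simp only; rw [hv]; omega
    rw [if_congr (and_congr e Iff.rfl) rfl rfl, if_congr (and_congr e Iff.rfl) rfl rfl]

lemma D0_down (x y : Equiv.Perm (ZMod n)) (i j : ZMod n) :
    D0 x y (i, j - 1) = ∑ k : ZMod n,
      ((if k.val ≤ i.val ∧ (x k).val < j.val then (1:ℤ) else 0)
        - (if k.val ≤ i.val ∧ (y k).val < j.val then (1:ℤ) else 0)) := by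
  unfold D0
  by_cases h : j = 0
  · subst h
    have htop : ∀ m : ZMod n, m.val ≤ ((0:ZMod n) - 1).val := by
      intro m; rw [zero_sub_one_val]; have := ZMod.val_lt m; omega
    have e1 : ∀ k : ZMod n,
        ((if k.val ≤ (i, (0:ZMod n) - 1).1.val ∧ (x k).val ≤ (i, (0:ZMod n) - 1).2.val then (1:ℤ) else 0)
          - (if k.val ≤ (i, (0:ZMod n) - 1).1.val ∧ (y k).val ≤ (i, (0:ZMod n) - 1).2.val then (1:ℤ) else 0))
        = 0 := by
      intro k
      rw [if_congr (and_iff_left (htop (x k))) rfl rfl, if_congr (and_iff_left (htop (y k))) rfl rfl]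
      ring
    rw [Finset.sum_congr rfl (fun k _ => e1 k)]
    have e2 : ∀ k : ZMod n,
        ((if k.val ≤ i.val ∧ (x k).val < (0:ZMod n).val then (1:ℤ) else 0)
          - (if k.val ≤ i.val ∧ (y k).val < (0:ZMod n).val then (1:ℤ) else 0)) = 0 := by
      intro k
      rw [if_neg (by rintro ⟨_, h2⟩; simp [ZMod.val_zero] at h2),
        if_neg (by rintro ⟨_, h2⟩; simp [ZMod.val_zero] at h2)]
      ring
    rw [Finset.sum_congr rfl (fun k _ => e2 k)]
  · have hv := sub_one_val h
    have h1 := one_le_val h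
    apply Finset.sum_congr rfl
    intro k _
    have ex : ((x k).val ≤ (i, j - 1).2.val) ↔ ((x k).val < j.val) := by
      simp only; rw [hv]; omega
    have ey : ((y k).val ≤ (i, j - 1).2.val) ↔ ((y k).val < j.val) := by
      simp only; rw [hv]; omega
    rw [if_congr (and_congr Iff.rfl ex) rfl rfl, if_congr (and_congr Iff.rfl ey) rfl rfl]

lemma D0_both (x y : Equiv.Perm (ZMod n)) (i j : ZMod n) :
    D0 x y (i - 1, j - 1) = ∑ k : ZMod n,
      ((if k.val < i.val ∧ (x k).val < j.val then (1:ℤ) else 0)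
        - (if k.val < i.val ∧ (y k).val < j.val then (1:ℤ) else 0)) := by
  rw [D0_left x y i (j - 1)]
  by_cases h : j = 0
  · subst h
    have htop : ∀ m : ZMod n, m.val ≤ ((0:ZMod n) - 1).val := by
      intro m; rw [zero_sub_one_val]; have := ZMod.val_lt m; omega
    have e1 : ∀ k : ZMod n,
        ((if k.val < i.val ∧ (x k).val ≤ ((0:ZMod n) - 1).val then (1:ℤ) else 0)
          - (if k.val < i.val ∧ (y k).val ≤ ((0:ZMod n) - 1).val then (1:ℤ) else 0)) = 0 := by
      intro k
      rw [if_congr (and_iff_left (htop (x k))) rfl rfl, if_congr (and_iff_left (htop (y k))) rfl rfl]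
      ring
    have e2 : ∀ k : ZMod n,
        ((if k.val < i.val ∧ (x k).val < (0:ZMod n).val then (1:ℤ) else 0)
          - (if k.val < i.val ∧ (y k).val < (0:ZMod n).val then (1:ℤ) else 0)) = 0 := by
      intro k
      rw [if_neg (by rintro ⟨_, h2⟩; simp [ZMod.val_zero] at h2),
        if_neg (by rintro ⟨_, h2⟩; simp [ZMod.val_zero] at h2)]
      ring
    rw [Finset.sum_congr rfl (fun k _ => e1 k), Finset.sum_congr rfl (fun k _ => e2 k)]
  · have hv := sub_one_val h
    have h1 := one_le_val h
    apply Finset.sum_congr rfl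
    intro k _
    have ex : ((x k).val ≤ (j - 1 : ZMod n).val) ↔ ((x k).val < j.val) := by rw [hv]; omega
    have ey : ((y k).val ≤ (j - 1 : ZMod n).val) ↔ ((y k).val < j.val) := by rw [hv]; omega
    rw [if_congr (and_congr Iff.rfl ex) rfl rfl, if_congr (and_congr Iff.rfl ey) rfl rfl]

lemma cast_ind (P : Prop) [Decidable P] : (((if P then (1:ℤ) else 0) : ℤ) : ℚ) = if P then (1:ℚ) else 0 := by
  split_ifs <;> norm_num

lemma hD0 (x y : Equiv.Perm (ZMod n)) : IsGridDomain n x y (D0 x y) := by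
  intro i j
  rw [D0_left x y i j, D0_down x y i j, D0_both x y i j]
  have e0 : D0 x y (i, j) = ∑ k : ZMod n,
      ((if k.val ≤ i.val ∧ (x k).val ≤ j.val then (1:ℤ) else 0)
        - (if k.val ≤ i.val ∧ (y k).val ≤ j.val then (1:ℤ) else 0)) := rfl
  rw [e0, ← Finset.sum_sub_distrib, ← Finset.sum_sub_distrib, ← Finset.sum_add_distrib]
  have zkey : ∀ (z : Equiv.Perm (ZMod n)) (k : ZMod n),
      ((if k.val ≤ i.val ∧ (z k).val ≤ j.val then (1:ℤ) else 0)
        - (if k.val < i.val ∧ (z k).val ≤ j.val then (1:ℤ) else 0)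
        - (if k.val ≤ i.val ∧ (z k).val < j.val then (1:ℤ) else 0)
        + (if k.val < i.val ∧ (z k).val < j.val then (1:ℤ) else 0))
      = (if k = i then (if z i = j then (1:ℤ) else 0) else 0) := by
    intro z k
    by_cases hk : k = i
    · subst hk
      simp only [← val_inj]
      split_ifs <;> first | (exfalso; omega) | norm_num
    · have hvv : k.val ≠ i.val := fun hh => hk (val_inj.mp hh)
      simp only [← val_inj]
      split_ifs <;> first | (exfalso; omega) | norm_num
  have point : ∀ k : ZMod n,
      (((if k.val ≤ i.val ∧ (x k).val ≤ j.val then (1:ℤ) else 0)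
          - (if k.val ≤ i.val ∧ (y k).val ≤ j.val then (1:ℤ) else 0))
        - ((if k.val < i.val ∧ (x k).val ≤ j.val then (1:ℤ) else 0)
          - (if k.val < i.val ∧ (y k).val ≤ j.val then (1:ℤ) else 0))
        - ((if k.val ≤ i.val ∧ (x k).val < j.val then (1:ℤ) else 0)
          - (if k.val ≤ i.val ∧ (y k).val < j.val then (1:ℤ) else 0))
        + ((if k.val < i.val ∧ (x k).val < j.val then (1:ℤ) else 0)
          - (if k.val < i.val ∧ (y k).val < j.val then (1:ℤ) else 0)))
      = (if k = i then ((if x i = j then (1:ℤ) else 0) - (if y i = j then (1:ℤ) else 0)) else 0) := by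
    intro k
    have hx := zkey x k
    have hy := zkey y k
    have comb : (if k = i then ((if x i = j then (1:ℤ) else 0) - (if y i = j then (1:ℤ) else 0)) else 0)
        = (if k = i then (if x i = j then (1:ℤ) else 0) else 0)
          - (if k = i then (if y i = j then (1:ℤ) else 0) else 0) := by
      split_ifs <;> norm_num
    rw [comb, ← hx, ← hy]
    ring
  rw [Finset.sum_congr rfl (fun k _ => point k),
    Finset.sum_ite_eq' Finset.univ i
      (fun _ => ((if x i = j then (1:ℤ) else 0) - (if y i = j then (1:ℤ) else 0)))]
  simp

lemma exists_AB {x y : Equiv.Perm (ZMod n)} {D : ZMod n × ZMod n → ℤ}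
    (hD : IsGridDomain n x y D) :
    ∃ A B : ZMod n → ℤ, ∀ p, D p = D0 x y p + A p.1 + B p.2 := by
  set E : ZMod n × ZMod n → ℤ := fun p => D p - D0 x y p with hE
  have hdd : ∀ i j : ZMod n, E (i,j) - E (i-1,j) - E (i,j-1) + E (i-1,j-1) = 0 := by
    intro i j
    have h1 := hD i j
    have h2 := hD0 x y i j
    simp only [hE]
    linarith [h1, h2]
  have key : ∀ a b : ℕ, E ((a:ZMod n), (b:ZMod n))
      = E ((a:ZMod n), 0) + E (0, (b:ZMod n)) - E (0,0) := by
    intro a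
    induction a with
    | zero =>
      intro b; simp only [Nat.cast_zero]; ring
    | succ a ih =>
      intro b
      induction b with
      | zero => simp only [Nat.cast_zero]; ring
      | succ b ihb =>
        have h := hdd ((a:ZMod n)+1) ((b:ZMod n)+1)
        have e1 : ((a:ZMod n)+1) - 1 = (a:ZMod n) := by ring
        have e2 : ((b:ZMod n)+1) - 1 = (b:ZMod n) := by ring
        rw [e1, e2] at h
        have ha := ih (b+1)
        have hab := ih b
        push_cast [Nat.cast_add, Nat.cast_one] at ha hab ihb ⊢
        linarith [h, ha, ihb, hab]
  refine ⟨fun i => E (i, 0) - E (0,0), fun j => E (0, j), ?_⟩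
  rintro ⟨i, j⟩
  have hk := key i.val j.val
  rw [ZMod.natCast_rightInverse i, ZMod.natCast_rightInverse j] at hk
  show D (i, j) = D0 x y (i, j) + (E (i, 0) - E (0,0)) + E (0, j)
  simp only [hE] at hk ⊢
  linarith [hk]

lemma sumD0_O (ρ x y : Equiv.Perm (ZMod n)) :
    ∑ i : ZMod n, ((D0 x y (i, ρ i) : ℤ) : ℚ) = UO ρ x - UO ρ y := by
  have point : ∀ i : ZMod n, ((D0 x y (i, ρ i) : ℤ):ℚ)
      = ∑ k : ZMod n, ((if k.val ≤ i.val ∧ (x k).val ≤ (ρ i).val then (1:ℚ) else 0)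
          - (if k.val ≤ i.val ∧ (y k).val ≤ (ρ i).val then (1:ℚ) else 0)) := by
    intro i
    have e0 : D0 x y (i, ρ i) = ∑ k : ZMod n,
        ((if k.val ≤ i.val ∧ (x k).val ≤ (ρ i).val then (1:ℤ) else 0)
          - (if k.val ≤ i.val ∧ (y k).val ≤ (ρ i).val then (1:ℤ) else 0)) := rfl
    rw [e0]
    push_cast
    rfl
  rw [Finset.sum_congr rfl (fun i _ => point i), sum2_sub]
  unfold UO
  rw [show (∑ i : ZMod n, ∑ k : ZMod n, (if k.val ≤ i.val ∧ (x k).val ≤ (ρ i).val then (1:ℚ) else 0))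
      = ∑ i : ZMod n, ∑ k : ZMod n, (if i.val ≤ k.val ∧ (x i).val ≤ (ρ k).val then (1:ℚ) else 0) from
    sum2_swap _]
  rw [show (∑ i : ZMod n, ∑ k : ZMod n, (if k.val ≤ i.val ∧ (y k).val ≤ (ρ i).val then (1:ℚ) else 0))
      = ∑ i : ZMod n, ∑ k : ZMod n, (if i.val ≤ k.val ∧ (y i).val ≤ (ρ k).val then (1:ℚ) else 0) from
    sum2_swap _]

lemma sumD0_X_diff (ρ x y : Equiv.Perm (ZMod n)) :
    ∑ i : ZMod n, (((D0 x y (i - 1, ρ i) : ℤ):ℚ) - ((D0 x y (i, ρ i) : ℤ):ℚ))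
      = Ele y ρ - Ele x ρ := by
  have point : ∀ i : ZMod n, (D0 x y (i - 1, ρ i) - D0 x y (i, ρ i) : ℤ)
      = (if (y i).val ≤ (ρ i).val then (1:ℤ) else 0)
        - (if (x i).val ≤ (ρ i).val then (1:ℤ) else 0) := by
    intro i
    rw [D0_left x y i (ρ i)]
    have e0 : D0 x y (i, ρ i) = ∑ k : ZMod n,
        ((if k.val ≤ i.val ∧ (x k).val ≤ (ρ i).val then (1:ℤ) else 0)
          - (if k.val ≤ i.val ∧ (y k).val ≤ (ρ i).val then (1:ℤ) else 0)) := rfl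
    rw [e0, ← Finset.sum_sub_distrib]
    have pk : ∀ k : ZMod n,
        (((if k.val < i.val ∧ (x k).val ≤ (ρ i).val then (1:ℤ) else 0)
            - (if k.val < i.val ∧ (y k).val ≤ (ρ i).val then (1:ℤ) else 0))
          - ((if k.val ≤ i.val ∧ (x k).val ≤ (ρ i).val then (1:ℤ) else 0)
            - (if k.val ≤ i.val ∧ (y k).val ≤ (ρ i).val then (1:ℤ) else 0)))
        = (if k = i then ((if (y i).val ≤ (ρ i).val then (1:ℤ) else 0)
            - (if (x i).val ≤ (ρ i).val then (1:ℤ) else 0)) else 0) := by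
      intro k
      by_cases hk : k = i
      · subst hk
        simp only [← val_inj]
        split_ifs <;> first | (exfalso; omega) | norm_num
      · have hvv : k.val ≠ i.val := fun hh => hk (val_inj.mp hh)
        simp only [← val_inj]
        split_ifs <;> first | (exfalso; omega) | norm_num
    rw [Finset.sum_congr rfl (fun k _ => pk k),
      Finset.sum_ite_eq' Finset.univ i
        (fun _ => ((if (y i).val ≤ (ρ i).val then (1:ℤ) else 0)
            - (if (x i).val ≤ (ρ i).val then (1:ℤ) else 0)))]
    simp
  have pq : ∀ i : ZMod n, ((D0 x y (i - 1, ρ i) : ℤ):ℚ) - ((D0 x y (i, ρ i) : ℤ):ℚ)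
      = (if (y i).val ≤ (ρ i).val then (1:ℚ) else 0)
        - (if (x i).val ≤ (ρ i).val then (1:ℚ) else 0) := by
    intro i
    rw [← Int.cast_sub, point i]
    push_cast
    rfl
  rw [Finset.sum_congr rfl (fun i _ => pq i), Finset.sum_sub_distrib]
  rfl

lemma sum_nPt_D0 (x y σ : Equiv.Perm (ZMod n)) :
    ∑ i : ZMod n, nPt n (D0 x y) (i, σ i) = (Wf x σ - Wf y σ)/4 := by
  have point : ∀ i : ZMod n, nPt n (D0 x y) (i, σ i)
      = (∑ k : ZMod n,
          (((if k.val ≤ i.val ∧ (x k).val ≤ (σ i).val then (1:ℚ) else 0)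
            + (if k.val < i.val ∧ (x k).val ≤ (σ i).val then 1 else 0)
            + (if k.val ≤ i.val ∧ (x k).val < (σ i).val then 1 else 0)
            + (if k.val < i.val ∧ (x k).val < (σ i).val then 1 else 0))
          - ((if k.val ≤ i.val ∧ (y k).val ≤ (σ i).val then (1:ℚ) else 0)
            + (if k.val < i.val ∧ (y k).val ≤ (σ i).val then 1 else 0)
            + (if k.val ≤ i.val ∧ (y k).val < (σ i).val then 1 else 0)
            + (if k.val < i.val ∧ (y k).val < (σ i).val then 1 else 0))))/4 := by
    intro i
    have hz : (D0 x y (i, σ i) + D0 x y (i - 1, σ i) + D0 x y (i, σ i - 1)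
        + D0 x y (i - 1, σ i - 1) : ℤ)
        = ∑ k : ZMod n,
          (((if k.val ≤ i.val ∧ (x k).val ≤ (σ i).val then (1:ℤ) else 0)
            + (if k.val < i.val ∧ (x k).val ≤ (σ i).val then 1 else 0)
            + (if k.val ≤ i.val ∧ (x k).val < (σ i).val then 1 else 0)
            + (if k.val < i.val ∧ (x k).val < (σ i).val then 1 else 0))
          - ((if k.val ≤ i.val ∧ (y k).val ≤ (σ i).val then (1:ℤ) else 0)
            + (if k.val < i.val ∧ (y k).val ≤ (σ i).val then 1 else 0)
            + (if k.val ≤ i.val ∧ (y k).val < (σ i).val then 1 else 0)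
            + (if k.val < i.val ∧ (y k).val < (σ i).val then 1 else 0))) := by
      rw [D0_left x y i (σ i), D0_down x y i (σ i), D0_both x y i (σ i)]
      have e0 : D0 x y (i, σ i) = ∑ k : ZMod n,
          ((if k.val ≤ i.val ∧ (x k).val ≤ (σ i).val then (1:ℤ) else 0)
            - (if k.val ≤ i.val ∧ (y k).val ≤ (σ i).val then (1:ℤ) else 0)) := rfl
      rw [e0, ← Finset.sum_add_distrib, ← Finset.sum_add_distrib, ← Finset.sum_add_distrib]
      exact Finset.sum_congr rfl fun k _ => by ring
    have hq : nPt n (D0 x y) (i, σ i)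
        = ((D0 x y (i, σ i) + D0 x y (i - 1, σ i) + D0 x y (i, σ i - 1)
            + D0 x y (i - 1, σ i - 1) : ℤ) : ℚ)/4 := by
      show (((D0 x y (i, σ i) : ℤ):ℚ) + ((D0 x y (i - 1, σ i) : ℤ):ℚ)
          + ((D0 x y (i, σ i - 1) : ℤ):ℚ) + ((D0 x y (i - 1, σ i - 1) : ℤ):ℚ))/4 = _
      push_cast
      ring
    rw [hq, hz]
    push_cast
    congr 1
  rw [Finset.sum_congr rfl (fun i _ => point i), ← Finset.sum_div, sum2_sub]
  rfl

lemma MGr_eval (ρ σ : Equiv.Perm (ZMod n)) :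
    MGr n ρ σ = Sf σ σ - (Sf ρ σ + UO ρ σ) + JJ n (oPt n ρ) (oPt n ρ) + 1 := by
  unfold MGr
  rw [Jgg_eval σ, JJ_comm (oPt n ρ) (genPt n σ), JgO_eval ρ σ]
  ring

lemma AGr_diff (ρ x y : Equiv.Perm (ZMod n)) :
    AGr n ρ x - AGr n ρ y = Ele y ρ - Ele x ρ := by
  unfold AGr
  rw [JgX_eval ρ x, JgX_eval ρ y, JgO_eval ρ x, JgO_eval ρ y]
  have h1 := UX_sub_TX ρ x
  have h2 := UX_sub_TX ρ y
  have h3 := UO_sub_Sf ρ x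
  have h4 := UO_sub_Sf ρ y
  have h5 := UX_sub_UO ρ x
  have h6 := UX_sub_UO ρ y
  linarith

end GC

/-- For a domain `D` from `x̃` to `ỹ`:
`M(x̃) − M(ỹ) = μ(D) − 2 Σ_i n_{O_i}(D)` and
`A(x̃) − A(ỹ) = Σ_i (n_{X_i}(D) − n_{O_i}(D))`. -/
theorem grading_change_of_domain (n : ℕ) [NeZero n] (ρ x y : Equiv.Perm (ZMod n))
    (D : ZMod n × ZMod n → ℤ) (hD : IsGridDomain n x y D) :
    MGr n ρ x - MGr n ρ y
      = maslovIndex n x y D - 2 * ∑ i : ZMod n, (D (i, ρ i) : ℚ) ∧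
    AGr n ρ x - AGr n ρ y
      = ∑ i : ZMod n, ((D (i - 1, ρ i) : ℚ) - (D (i, ρ i) : ℚ)) := by
  obtain ⟨A, B, hAB⟩ := GC.exists_AB hD
  have rA : ∑ i : ZMod n, ((A (i - 1) : ℤ):ℚ) = ∑ i : ZMod n, ((A i : ℤ):ℚ) := by
    have := Equiv.sum_comp (Equiv.subRight (1:ZMod n)) (fun j => ((A j : ℤ):ℚ))
    simpa [Equiv.subRight_apply] using this
  have rB : ∀ σ : Equiv.Perm (ZMod n),
      ∑ i : ZMod n, ((B (σ i) : ℤ):ℚ) = ∑ i : ZMod n, ((B i:ℤ):ℚ) :=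
    fun σ => Equiv.sum_comp σ (fun j => ((B j : ℤ):ℚ))
  have rB' : ∀ σ : Equiv.Perm (ZMod n),
      ∑ i : ZMod n, ((B (σ i - 1) : ℤ):ℚ) = ∑ i : ZMod n, ((B i:ℤ):ℚ) := by
    intro σ
    have := Equiv.sum_comp (σ.trans (Equiv.subRight (1:ZMod n))) (fun j => ((B j : ℤ):ℚ))
    simpa [Equiv.subRight_apply] using this
  have hnPt : ∀ σ : Equiv.Perm (ZMod n), ∑ i : ZMod n, nPt n D (i, σ i)
      = ∑ i : ZMod n, nPt n (GC.D0 x y) (i, σ i)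
        + ∑ i : ZMod n, ((A i:ℤ):ℚ) + ∑ i : ZMod n, ((B i:ℤ):ℚ) := by
    intro σ
    have point : ∀ i : ZMod n, nPt n D (i, σ i) = nPt n (GC.D0 x y) (i, σ i)
        + (((A i:ℤ):ℚ) + ((A (i-1):ℤ):ℚ))/2
        + (((B (σ i):ℤ):ℚ) + ((B (σ i - 1):ℤ):ℚ))/2 := by
      intro i
      unfold nPt
      rw [hAB (i, σ i), hAB ((i, σ i).1 - 1, (i, σ i).2),
        hAB ((i, σ i).1, (i, σ i).2 - 1), hAB ((i, σ i).1 - 1, (i, σ i).2 - 1)]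
      push_cast
      ring
    rw [Finset.sum_congr rfl (fun i _ => point i), Finset.sum_add_distrib,
      Finset.sum_add_distrib]
    have eA : ∑ i : ZMod n, ((((A i:ℤ):ℚ) + ((A (i-1):ℤ):ℚ))/2)
        = ∑ i : ZMod n, ((A i:ℤ):ℚ) := by
      rw [← Finset.sum_div, Finset.sum_add_distrib, rA]; ring
    have eB : ∑ i : ZMod n, ((((B (σ i):ℤ):ℚ) + ((B (σ i - 1):ℤ):ℚ))/2)
        = ∑ i : ZMod n, ((B i:ℤ):ℚ) := by
      rw [← Finset.sum_div, Finset.sum_add_distrib, rB σ, rB' σ]; ring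
    rw [eA, eB]
  have hO : ∑ i : ZMod n, ((D (i, ρ i) : ℤ):ℚ)
      = ∑ i : ZMod n, ((GC.D0 x y (i, ρ i):ℤ):ℚ)
        + ∑ i : ZMod n, ((A i:ℤ):ℚ) + ∑ i : ZMod n, ((B i:ℤ):ℚ) := by
    have point : ∀ i : ZMod n, ((D (i, ρ i):ℤ):ℚ)
        = ((GC.D0 x y (i, ρ i):ℤ):ℚ) + ((A i:ℤ):ℚ) + ((B (ρ i):ℤ):ℚ) := by
      intro i; rw [hAB (i, ρ i)]; push_cast; ring
    rw [Finset.sum_congr rfl (fun i _ => point i), Finset.sum_add_distrib,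
      Finset.sum_add_distrib, rB ρ]
  have hXd : ∑ i : ZMod n, (((D (i - 1, ρ i):ℤ):ℚ) - ((D (i, ρ i):ℤ):ℚ))
      = ∑ i : ZMod n, (((GC.D0 x y (i - 1, ρ i):ℤ):ℚ) - ((GC.D0 x y (i, ρ i):ℤ):ℚ))
        + (∑ i : ZMod n, ((A (i-1):ℤ):ℚ) - ∑ i : ZMod n, ((A i:ℤ):ℚ)) := by
    have point : ∀ i : ZMod n, (((D (i - 1, ρ i):ℤ):ℚ) - ((D (i, ρ i):ℤ):ℚ))
        = (((GC.D0 x y (i - 1, ρ i):ℤ):ℚ) - ((GC.D0 x y (i, ρ i):ℤ):ℚ))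
          + (((A (i-1):ℤ):ℚ) - ((A i:ℤ):ℚ)) := by
      intro i; rw [hAB (i - 1, ρ i), hAB (i, ρ i)]; push_cast; ring
    rw [Finset.sum_congr rfl (fun i _ => point i), Finset.sum_add_distrib,
      Finset.sum_sub_distrib, Finset.sum_sub_distrib]
  constructor
  · rw [GC.MGr_eval ρ x, GC.MGr_eval ρ y]
    unfold maslovIndex
    rw [hnPt x, hnPt y, GC.sum_nPt_D0 x y x, GC.sum_nPt_D0 x y y, hO, GC.sumD0_O ρ x y]
    have hW1 := GC.W_eval x x
    have hW2 := GC.W_eval y x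
    have hW3 := GC.W_eval x y
    have hW4 := GC.W_eval y y
    have hGx := GC.Gf_self x
    have hGy := GC.Gf_self y
    have hEx := GC.Elt_self x
    have hEy := GC.Elt_self y
    have hQx := GC.Eeq_self x
    have hQy := GC.Eeq_self y
    have hU1 := GC.UO_sub_Sf ρ x
    have hU2 := GC.UO_sub_Sf ρ y
    have hI1 := GC.I1 x y
    have hI2 := GC.I2 y x
    have hI3a := GC.I3 x y
    have hI3b := GC.I3 y x
    have hI4 := GC.I4 x y
    have hEc := GC.Eeq_comm x y
    linarith
  · rw [GC.AGr_diff ρ x y, hXd, rA, GC.sumD0_X_diff ρ x y]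
    ring
end
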